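/- arXiv:2605.04364 — 8 statements merged into one kernel-verified Lean document; each statement's English description precedes it below -/
import Mathlib

section
/- Let z_t ∈ ℝ^d, y_t ∈ ℝ, ỹ_t ∈ ℝ be arbitrary sequences for t = 1,…,T, let λ > 0, and set G_t := λ I + ∑_{s=1}^t z_s z_sᵀ, b_{t-1} := ∑_{s=1}^{t-1} z_s y_s, and m_t := G_t⁻¹ (b_{t-1} + z_t ỹ_t). Then for every comparator u ∈ ℝ^d, ∑_{t=1}^T (m_tᵀ z_t − y_t)² − ∑_{t=1}^T (uᵀ z_t − y_t)² ≤ λ ‖u‖² + ∑_{t=1}^T Δ_t² · z_tᵀ G_t⁻¹ z_t, where Δ_t := y_t − ỹ_t. -/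
open Matrix

private lemma sum_mulVec_aux {d : ℕ} (F : Finset ℕ) (M : ℕ → Matrix (Fin d) (Fin d) ℝ)
    (v : Fin d → ℝ) : (∑ s ∈ F, M s).mulVec v = ∑ s ∈ F, (M s).mulVec v := by
  ext i
  simp [Matrix.mulVec, dotProduct, Finset.sum_apply, Matrix.sum_apply, Finset.sum_mul]
  rw [Finset.sum_comm]

private lemma dotProduct_sum_aux {d : ℕ} (F : Finset ℕ) (v : Fin d → ℝ) (w : ℕ → Fin d → ℝ) :
    dotProduct v (∑ s ∈ F, w s) = ∑ s ∈ F, dotProduct v (w s) := by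
  simp [dotProduct, Finset.sum_apply, Finset.mul_sum]
  rw [Finset.sum_comm]

private lemma vecMulVec_mulVec_aux {d : ℕ} (a c v : Fin d → ℝ) :
    (Matrix.vecMulVec a c).mulVec v = (dotProduct c v) • a := by
  ext i
  show ∑ j, (a i * c j) * v j = (∑ j, c j * v j) * a i
  rw [Finset.sum_mul]
  exact Finset.sum_congr rfl fun j _ => by ring

/-- scalar predictive online least squares (POLS) regret bound.
With `G_t = λI + ∑_{s≤t} z_s z_sᵀ`, `b_{t-1} = ∑_{s<t} y_s z_s`, and the POLS iterate
`m_t = G_t⁻¹ (b_{t-1} + ỹ_t z_t)`, for every comparator `u`,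
`∑ (m_tᵀz_t − y_t)² − ∑ (uᵀz_t − y_t)² ≤ λ‖u‖² + ∑ Δ_t² z_tᵀ G_t⁻¹ z_t`,
where `Δ_t = y_t − ỹ_t`. -/
theorem scalar_pols_regret
    (d T : ℕ) (lam : ℝ) (hlam : 0 < lam)
    (z : ℕ → Fin d → ℝ) (y ytil : ℕ → ℝ)
    (G : ℕ → Matrix (Fin d) (Fin d) ℝ)
    (hG : ∀ t, G t = lam • (1 : Matrix (Fin d) (Fin d) ℝ) +
      ∑ s ∈ Finset.Icc 1 t, Matrix.vecMulVec (z s) (z s))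
    (b : ℕ → Fin d → ℝ)
    (hb : ∀ t, b t = ∑ s ∈ Finset.Icc 1 t, y s • z s)
    (m : ℕ → Fin d → ℝ)
    (hm : ∀ t, m t = (G t)⁻¹.mulVec (b (t - 1) + ytil t • z t))
    (u : Fin d → ℝ) :
    ∑ t ∈ Finset.Icc 1 T, (dotProduct (m t) (z t) - y t) ^ 2
      - ∑ t ∈ Finset.Icc 1 T, (dotProduct u (z t) - y t) ^ 2
    ≤ lam * dotProduct u u
      + ∑ t ∈ Finset.Icc 1 T,
          (y t - ytil t) ^ 2 * dotProduct (z t) ((G t)⁻¹.mulVec (z t)) := by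
  classical
  have hIcc : ∀ N : ℕ, Finset.Icc 1 (N + 1) = insert (N + 1) (Finset.Icc 1 N) :=
    fun N => (Finset.insert_Icc_right_eq_Icc_add_one (Nat.succ_le_succ (Nat.zero_le N))).symm
  have hnotmem : ∀ N : ℕ, (N + 1) ∉ Finset.Icc 1 N := by
    intro N h
    simp only [Finset.mem_Icc] at h
    omega
  -- quadratic form of G t
  have hQ : ∀ t (v : Fin d → ℝ), dotProduct v ((G t).mulVec v)
      = lam * dotProduct v v
        + ∑ s ∈ Finset.Icc 1 t, (dotProduct v (z s)) ^ 2 := by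
    intro t v
    rw [hG t, Matrix.add_mulVec, dotProduct_add, Matrix.smul_mulVec,
      Matrix.one_mulVec, dotProduct_smul, smul_eq_mul, sum_mulVec_aux,
      dotProduct_sum_aux]
    congr 1
    refine Finset.sum_congr rfl fun s _ => ?_
    rw [vecMulVec_mulVec_aux, dotProduct_smul, smul_eq_mul,
      dotProduct_comm (z s) v, sq]
  have hdnn : ∀ v : Fin d → ℝ, 0 ≤ dotProduct v v :=
    fun v => Finset.sum_nonneg fun i _ => mul_self_nonneg _
  have hnn : ∀ t (v : Fin d → ℝ), 0 ≤ dotProduct v ((G t).mulVec v) := by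
    intro t v
    rw [hQ]
    exact add_nonneg (mul_nonneg hlam.le (hdnn v))
      (Finset.sum_nonneg fun s _ => sq_nonneg _)
  -- symmetry of G t
  have hGT : ∀ t, (G t)ᵀ = G t := by
    intro t
    ext i j
    rw [hG t]
    simp only [Matrix.transpose_apply, Matrix.add_apply, Matrix.smul_apply,
      Matrix.one_apply, Matrix.sum_apply, Matrix.vecMulVec_apply, smul_eq_mul]
    have hif : (if j = i then (1:ℝ) else 0) = if i = j then 1 else 0 := by
      by_cases h : i = j
      · simp [h]
      · simp [h, Ne.symm h]
    rw [hif]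
    congr 1
    exact Finset.sum_congr rfl fun s _ => mul_comm _ _
  -- positive definiteness, invertibility
  have hPD : ∀ t, (G t).PosDef := by
    intro t
    rw [Matrix.posDef_iff_dotProduct_mulVec]
    constructor
    · show (G t)ᴴ = G t
      have : (G t)ᴴ = (G t)ᵀ := by
        ext i j
        simp [Matrix.conjTranspose_apply]
      rw [this, hGT]
    · intro x hx
      have hsx : star x = x := by simp
      rw [hsx, hQ]
      have h1 : 0 < dotProduct x x := by
        rcases lt_or_eq_of_le (hdnn x) with h | h
        · exact h
        · exact absurd (dotProduct_self_eq_zero.mp h.symm) hx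
      have h2 : 0 ≤ ∑ s ∈ Finset.Icc 1 t, (dotProduct x (z s)) ^ 2 :=
        Finset.sum_nonneg fun s _ => sq_nonneg _
      have := mul_pos hlam h1
      linarith
  have hUnit : ∀ t, IsUnit (G t).det := fun t => (hPD t).det_pos.ne'.isUnit
  have hGG : ∀ t (x : Fin d → ℝ), (G t).mulVec ((G t)⁻¹.mulVec x) = x := by
    intro t x
    rw [Matrix.mulVec_mulVec, Matrix.mul_nonsing_inv _ (hUnit t), Matrix.one_mulVec]
  -- swap lemma for symmetric G
  have hswap : ∀ t (a c : Fin d → ℝ),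
      dotProduct a ((G t).mulVec c) = dotProduct c ((G t).mulVec a) := by
    intro t a c
    rw [dotProduct_mulVec]
    conv_lhs => rw [← hGT t]
    rw [Matrix.vecMul_transpose, dotProduct_comm]
  -- quadratic expansion
  have hexp : ∀ t (v : Fin d → ℝ),
      lam * dotProduct v v
        + ∑ s ∈ Finset.Icc 1 t, (dotProduct v (z s) - y s) ^ 2
      = dotProduct v ((G t).mulVec v) - 2 * dotProduct v (b t)
        + ∑ s ∈ Finset.Icc 1 t, (y s) ^ 2 := by
    intro t v
    rw [hQ, hb, dotProduct_sum_aux]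
    have h1 : ∀ s, dotProduct v (y s • z s) = y s * dotProduct v (z s) :=
      fun s => by rw [dotProduct_smul, smul_eq_mul]
    simp only [h1]
    have h2 : ∑ s ∈ Finset.Icc 1 t, (dotProduct v (z s) - y s) ^ 2
        = ∑ s ∈ Finset.Icc 1 t,
            ((dotProduct v (z s)) ^ 2 - 2 * (y s * dotProduct v (z s)) + (y s) ^ 2) :=
      Finset.sum_congr rfl fun s _ => by ring
    rw [h2, Finset.sum_add_distrib, Finset.sum_sub_distrib, ← Finset.mul_sum]
    ring
  -- optimality identity
  have hopt : ∀ t (v : Fin d → ℝ),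
      (lam * dotProduct v v
          + ∑ s ∈ Finset.Icc 1 t, (dotProduct v (z s) - y s) ^ 2)
        - (lam * dotProduct ((G t)⁻¹.mulVec (b t)) ((G t)⁻¹.mulVec (b t))
          + ∑ s ∈ Finset.Icc 1 t,
              (dotProduct ((G t)⁻¹.mulVec (b t)) (z s) - y s) ^ 2)
      = dotProduct (v - (G t)⁻¹.mulVec (b t))
          ((G t).mulVec (v - (G t)⁻¹.mulVec (b t))) := by
    intro t v
    have e1 : (G t).mulVec ((G t)⁻¹.mulVec (b t)) = b t := hGG t (b t)
    have e2 : dotProduct ((G t)⁻¹.mulVec (b t)) ((G t).mulVec v)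
        = dotProduct v (b t) := by
      rw [hswap, e1]
    rw [hexp t v, hexp t ((G t)⁻¹.mulVec (b t)), Matrix.mulVec_sub, sub_dotProduct,
      dotProduct_sub, dotProduct_sub, e1, e2]
    ring
  -- minimum nonneg spread
  have hoptle : ∀ t (v : Fin d → ℝ),
      lam * dotProduct ((G t)⁻¹.mulVec (b t)) ((G t)⁻¹.mulVec (b t))
          + ∑ s ∈ Finset.Icc 1 t,
              (dotProduct ((G t)⁻¹.mulVec (b t)) (z s) - y s) ^ 2
      ≤ lam * dotProduct v v
          + ∑ s ∈ Finset.Icc 1 t, (dotProduct v (z s) - y s) ^ 2 := by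
    intro t v
    have := hopt t v
    have h0 := hnn t (v - (G t)⁻¹.mulVec (b t))
    linarith
  -- main induction
  have key : ∀ N : ℕ,
      ∑ t ∈ Finset.Icc 1 N, (dotProduct (m t) (z t) - y t) ^ 2
      ≤ (lam * dotProduct ((G N)⁻¹.mulVec (b N)) ((G N)⁻¹.mulVec (b N))
          + ∑ s ∈ Finset.Icc 1 N,
              (dotProduct ((G N)⁻¹.mulVec (b N)) (z s) - y s) ^ 2)
        + ∑ t ∈ Finset.Icc 1 N,
            (y t - ytil t) ^ 2 * dotProduct (z t) ((G t)⁻¹.mulVec (z t)) := by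
    intro N
    induction N with
    | zero =>
      have he : Finset.Icc 1 0 = (∅ : Finset ℕ) := Finset.Icc_eq_empty (by omega)
      rw [he]
      simp only [Finset.sum_empty, add_zero]
      have := mul_nonneg hlam.le (hdnn ((G 0)⁻¹.mulVec (b 0)))
      linarith
    | succ N ih =>
      -- notation
      set t := N + 1 with ht
      have hbsucc : b t = b N + y t • z t := by
        rw [hb, hb, hIcc N, Finset.sum_insert (hnotmem N), add_comm]
      have hmw : m t - (G t)⁻¹.mulVec (b t)
          = (G t)⁻¹.mulVec ((ytil t - y t) • z t) := by
        rw [hm t]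
        have : t - 1 = N := by omega
        rw [this, hbsucc, ← Matrix.mulVec_sub, add_sub_add_left_eq_sub, ← sub_smul]
      have hqv : dotProduct (m t - (G t)⁻¹.mulVec (b t))
            ((G t).mulVec (m t - (G t)⁻¹.mulVec (b t)))
          = (y t - ytil t) ^ 2 * dotProduct (z t) ((G t)⁻¹.mulVec (z t)) := by
        rw [hmw, hGG, dotProduct_smul, smul_eq_mul, Matrix.mulVec_smul,
          smul_dotProduct, smul_eq_mul,
          dotProduct_comm ((G t)⁻¹.mulVec (z t)) (z t)]
        ring
      -- F_{N+1}(m t) = A_{N+1} + Δ² q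
      have hFt : lam * dotProduct (m t) (m t)
            + ∑ s ∈ Finset.Icc 1 t, (dotProduct (m t) (z s) - y s) ^ 2
          = (lam * dotProduct ((G t)⁻¹.mulVec (b t)) ((G t)⁻¹.mulVec (b t))
              + ∑ s ∈ Finset.Icc 1 t,
                  (dotProduct ((G t)⁻¹.mulVec (b t)) (z s) - y s) ^ 2)
            + (y t - ytil t) ^ 2 * dotProduct (z t) ((G t)⁻¹.mulVec (z t)) := by
        have := hopt t (m t)
        rw [hqv] at this
        linarith
      -- A_N ≤ F_N(m t)
      have hAN := hoptle N (m t)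
      -- split sums in the goal (only the loss sum and the q sum)
      have hgoal1 : ∑ t' ∈ Finset.Icc 1 t, (dotProduct (m t') (z t') - y t') ^ 2
          = (dotProduct (m t) (z t) - y t) ^ 2
            + ∑ t' ∈ Finset.Icc 1 N, (dotProduct (m t') (z t') - y t') ^ 2 := by
        rw [ht, hIcc N, Finset.sum_insert (hnotmem N)]
      have hgoal3 : ∑ t' ∈ Finset.Icc 1 t,
            (y t' - ytil t') ^ 2 * dotProduct (z t') ((G t')⁻¹.mulVec (z t'))
          = (y t - ytil t) ^ 2 * dotProduct (z t) ((G t)⁻¹.mulVec (z t))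
            + ∑ t' ∈ Finset.Icc 1 N,
                (y t' - ytil t') ^ 2 * dotProduct (z t') ((G t')⁻¹.mulVec (z t')) := by
        rw [ht, hIcc N, Finset.sum_insert (hnotmem N)]
      rw [hgoal1, hgoal3]
      -- F_{N+1}(m t) split
      have hFsplit : ∑ s ∈ Finset.Icc 1 t, (dotProduct (m t) (z s) - y s) ^ 2
          = (dotProduct (m t) (z t) - y t) ^ 2
            + ∑ s ∈ Finset.Icc 1 N, (dotProduct (m t) (z s) - y s) ^ 2 := by
        rw [ht, hIcc N, Finset.sum_insert (hnotmem N)]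
      rw [hFsplit] at hFt
      linarith
  -- conclude
  have hcmp := hoptle T u
  have hkey := key T
  linarith
end

section
/- Let z_t ∈ ℝ^d, y_t ∈ ℝ^p, ỹ_t ∈ ℝ^p be arbitrary sequences for t = 1,…,T and let λ > 0. Let M_t^{pols} := (B_{t-1} + ỹ_t z_tᵀ) G_t⁻¹ be the POLS iterate. Then for every comparator matrix M ∈ ℝ^{p×d}, ∑_{t=1}^T ‖M_t^{pols} z_t − y_t‖² − ∑_{t=1}^T ‖M z_t − y_t‖² ≤ λ ‖M‖_F² + (max_{1≤t≤T} ‖y_t − ỹ_t‖²) · d · log(1 + (∑_{t=1}^T ‖z_t‖²)/(λ d)). -/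
open Matrix Finset
set_option linter.unusedSectionVars false
set_option maxHeartbeats 1000000

section IpAux
variable {m n : Type*} [Fintype m] [Fintype n] [DecidableEq n]

noncomputable def ip (A C : Matrix m n ℝ) : ℝ := ∑ i, ∑ j, A i j * C i j

lemma ip_comm (A C : Matrix m n ℝ) : ip A C = ip C A := by
  simp [ip, mul_comm]

lemma ip_nonneg (A : Matrix m n ℝ) : 0 ≤ ip A A := by
  apply Finset.sum_nonneg; intro i _; apply Finset.sum_nonneg; intro j _; exact mul_self_nonneg _

lemma ip_add_right (A C D : Matrix m n ℝ) : ip A (C + D) = ip A C + ip A D := by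
  simp [ip, mul_add, Finset.sum_add_distrib]

lemma ip_sub_right (A C D : Matrix m n ℝ) : ip A (C - D) = ip A C - ip A D := by
  simp [ip, mul_sub, Finset.sum_sub_distrib]

lemma ip_sub_left (A C D : Matrix m n ℝ) : ip (A - C) D = ip A D - ip C D := by
  simp [ip, sub_mul, Finset.sum_sub_distrib]

lemma ip_smul_right (c : ℝ) (A C : Matrix m n ℝ) : ip A (c • C) = c * ip A C := by
  simp [ip, Finset.mul_sum]; ring_nf; simp [mul_comm, mul_assoc, mul_left_comm]

lemma ip_sum_right {ι : Type*} (S : Finset ι) (A : Matrix m n ℝ) (f : ι → Matrix m n ℝ) :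
    ip A (∑ s ∈ S, f s) = ∑ s ∈ S, ip A (f s) := by
  classical
  induction S using Finset.induction_on with
  | empty => simp [ip]
  | insert _ _ hs ih => rw [Finset.sum_insert hs, ip_add_right, ih, Finset.sum_insert hs]

lemma ip_sum_left {ι : Type*} (S : Finset ι) (A : Matrix m n ℝ) (f : ι → Matrix m n ℝ) :
    ip (∑ s ∈ S, f s) A = ∑ s ∈ S, ip (f s) A := by
  rw [ip_comm, ip_sum_right]
  simp [ip_comm]

lemma ip_quad (A : Matrix m n ℝ) (G : Matrix n n ℝ) :
    ip A (A * G) = ∑ i, (A i) ⬝ᵥ (G *ᵥ (A i)) := by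
  simp only [ip, Matrix.mul_apply, dotProduct, Matrix.mulVec, Finset.mul_sum, Finset.sum_mul]
  rw [Finset.sum_congr rfl]
  intro i _
  rw [Finset.sum_comm]
  apply Finset.sum_congr rfl; intro j _
  apply Finset.sum_congr rfl; intro k _
  ring

lemma quad_nonneg {G : Matrix n n ℝ} (hG : G.PosSemidef) (A : Matrix m n ℝ) :
    0 ≤ ip A (A * G) := by
  rw [ip_quad]
  apply Finset.sum_nonneg; intro i _
  simpa using hG.dotProduct_mulVec_nonneg (A i)

lemma ip_mul_symm {G : Matrix n n ℝ} (hG : Gᵀ = G) (A C : Matrix m n ℝ) :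
    ip A (C * G) = ip C (A * G) := by
  simp only [ip, Matrix.mul_apply, Finset.mul_sum]
  rw [Finset.sum_congr rfl]
  intro i _
  rw [Finset.sum_comm]
  apply Finset.sum_congr rfl; intro j _
  apply Finset.sum_congr rfl; intro k _
  have : G k j = G j k := by conv_lhs => rw [← hG, Matrix.transpose_apply]
  rw [this]; ring

/-- completion of the square -/
lemma ip_quad_identity {G : Matrix n n ℝ} (hG : Gᵀ = G) (A N : Matrix m n ℝ) :
    ip (A - N) ((A - N) * G) = ip A (A * G) - 2 * ip (N * G) A + ip N (N * G) := by
  have h1 : ip A (N * G) = ip (N * G) A := by simp [ip, mul_comm]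
  have h2 : ip N (A * G) = ip A (N * G) := ip_mul_symm hG N A
  rw [Matrix.sub_mul, ip_sub_left, ip_sub_right, ip_sub_right, h2, h1]
  ring

lemma vecMulVec_mulVec' (u : m → ℝ) (v x : n → ℝ) :
    (Matrix.vecMulVec u v) *ᵥ x = (v ⬝ᵥ x) • u := by
  ext i
  simp only [Matrix.mulVec, Matrix.vecMulVec_apply, dotProduct, Pi.smul_apply, smul_eq_mul,
    Finset.sum_mul]
  apply Finset.sum_congr rfl; intro k _; ring

lemma vecMulVec_sub_left (u w : m → ℝ) (v : n → ℝ) :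
    Matrix.vecMulVec (u - w) v = Matrix.vecMulVec u v - Matrix.vecMulVec w v := by
  ext i j; simp [Matrix.vecMulVec_apply, sub_mul]

lemma sum_mulVec' {ι : Type*} (S : Finset ι) (f : ι → Matrix m n ℝ) (x : n → ℝ) :
    (∑ s ∈ S, f s) *ᵥ x = ∑ s ∈ S, (f s) *ᵥ x := by
  ext i
  simp only [Matrix.mulVec, dotProduct, Finset.sum_apply, Matrix.sum_apply, Finset.sum_mul]
  rw [Finset.sum_comm]

lemma dotProduct_sum' {ι : Type*} (S : Finset ι) (x : n → ℝ) (f : ι → n → ℝ) :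
    x ⬝ᵥ (∑ s ∈ S, f s) = ∑ s ∈ S, x ⬝ᵥ f s := by
  simp only [dotProduct, Finset.sum_apply, Finset.mul_sum]
  rw [Finset.sum_comm]

lemma dotProduct_self_pos' {x : n → ℝ} (hx : x ≠ 0) : 0 < x ⬝ᵥ x := by
  rcases (Finset.sum_nonneg (fun i _ => mul_self_nonneg (x i))).lt_or_eq with h | h
  · exact h
  · exact absurd (dotProduct_self_eq_zero.mp h.symm) hx

/-- expansion of the squared residual as a quadratic in the matrix -/
lemma residual_expand (A : Matrix m n ℝ) (u : n → ℝ) (v : m → ℝ) :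
    (A *ᵥ u - v) ⬝ᵥ (A *ᵥ u - v)
      = ip A (A * Matrix.vecMulVec u u) - 2 * ip (Matrix.vecMulVec v u) A + v ⬝ᵥ v := by
  have h1 : ip A (A * Matrix.vecMulVec u u) = (A *ᵥ u) ⬝ᵥ (A *ᵥ u) := by
    rw [ip_quad]
    apply Finset.sum_congr rfl; intro i _
    rw [vecMulVec_mulVec', dotProduct_smul, smul_eq_mul, dotProduct_comm u (A i)]
    rfl
  have h2 : ip (Matrix.vecMulVec v u) A = v ⬝ᵥ (A *ᵥ u) := by
    simp only [ip, Matrix.vecMulVec_apply, dotProduct, Matrix.mulVec, Finset.mul_sum]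
    apply Finset.sum_congr rfl; intro i _
    apply Finset.sum_congr rfl; intro j _
    ring
  rw [h1, h2]
  have key : ∀ (X : m → ℝ), (X - v) ⬝ᵥ (X - v) = X ⬝ᵥ X - 2 * (v ⬝ᵥ X) + v ⬝ᵥ v := by
    intro X
    simp only [dotProduct, Pi.sub_apply, Finset.mul_sum]
    rw [← Finset.sum_sub_distrib, ← Finset.sum_add_distrib]
    apply Finset.sum_congr rfl; intro i _; ring
  exact key (A *ᵥ u)

lemma ip_outer (r : m → ℝ) (zz : n → ℝ) (Q : Matrix n n ℝ) :
    ip (Matrix.vecMulVec r zz * Q) (Matrix.vecMulVec r zz)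
      = (r ⬝ᵥ r) * ((zz ᵥ* Q) ⬝ᵥ zz) := by
  simp only [ip, Matrix.mul_apply, Matrix.vecMulVec_apply, dotProduct, Matrix.vecMul,
    Finset.sum_mul, Finset.mul_sum]
  rw [Finset.sum_comm]
  apply Finset.sum_congr rfl; intro j _
  rw [Finset.sum_comm]
  apply Finset.sum_congr rfl; intro k _
  apply Finset.sum_congr rfl; intro i _
  ring
end IpAux

section PosAux
variable {n : Type*} [Fintype n] [DecidableEq n]

lemma posDef_G (lam : ℝ) (hlam : 0 < lam) (S : Finset ℕ) (z : ℕ → n → ℝ) :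
    (lam • (1 : Matrix n n ℝ) + ∑ s ∈ S, Matrix.vecMulVec (z s) (z s)).PosDef := by
  refine Matrix.PosDef.of_dotProduct_mulVec_pos ?_ ?_
  · unfold Matrix.IsHermitian
    ext i j
    simp only [Matrix.conjTranspose_apply, Matrix.add_apply, Matrix.smul_apply, Matrix.one_apply,
      Matrix.sum_apply, Matrix.vecMulVec_apply, star_trivial]
    congr 1
    · congr 1; exact if_congr eq_comm rfl rfl
    · apply Finset.sum_congr rfl; intro k _; ring
  · intro x hx
    have hstar : star x = x := star_trivial x
    rw [hstar, Matrix.add_mulVec, dotProduct_add, Matrix.smul_mulVec, Matrix.one_mulVec]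
    have h1 : x ⬝ᵥ lam • x = lam * (x ⬝ᵥ x) := by simp [dotProduct_smul]
    have h2 : 0 ≤ x ⬝ᵥ ((∑ s ∈ S, Matrix.vecMulVec (z s) (z s)) *ᵥ x) := by
      rw [sum_mulVec', dotProduct_sum']
      apply Finset.sum_nonneg
      intro s _
      rw [vecMulVec_mulVec', dotProduct_smul, smul_eq_mul, dotProduct_comm]
      exact mul_self_nonneg _
    have h3 : 0 < x ⬝ᵥ x := dotProduct_self_pos' hx
    nlinarith

lemma isUnit_det_of_posDef {A : Matrix n n ℝ} (hA : A.PosDef) : IsUnit A.det :=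
  isUnit_iff_ne_zero.mpr hA.det_pos.ne'

lemma det_rank_one_update {A : Matrix n n ℝ} (hA : IsUnit A.det) (z : n → ℝ) :
    (A + Matrix.vecMulVec z z).det = A.det * (1 + z ⬝ᵥ (A⁻¹ *ᵥ z)) := by
  rw [Matrix.vecMulVec_eq Unit z z, Matrix.det_add_replicateCol_mul_replicateRow hA]
  congr 1
  rw [Matrix.det_unique]
  simp only [Matrix.add_apply, Matrix.one_apply_eq, Matrix.mul_apply, Matrix.replicateRow_apply,
    Matrix.replicateCol_apply, Matrix.mulVec, dotProduct]
  congr 1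
  simp only [Finset.sum_mul, Finset.mul_sum]
  rw [Finset.sum_comm]
  apply Finset.sum_congr rfl; intro j _
  apply Finset.sum_congr rfl; intro k _
  ring

lemma step_log {A : Matrix n n ℝ} (hA : A.PosDef)
    (z : n → ℝ) (hA' : (A + Matrix.vecMulVec z z).PosDef) :
    z ⬝ᵥ ((A + Matrix.vecMulVec z z)⁻¹ *ᵥ z)
      ≤ Real.log (A + Matrix.vecMulVec z z).det - Real.log A.det := by
  set A' := A + Matrix.vecMulVec z z with hA'def
  set w := A⁻¹ *ᵥ z with hw
  set c := z ⬝ᵥ w with hc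
  have hcnn : 0 ≤ c := by
    have := hA.posSemidef.inv.dotProduct_mulVec_nonneg z
    rwa [star_trivial] at this
  have h1c : (0:ℝ) < 1 + c := by linarith
  have hAw : A *ᵥ w = z := by
    rw [hw, Matrix.mulVec_mulVec, Matrix.mul_nonsing_inv A (isUnit_det_of_posDef hA),
      Matrix.one_mulVec]
  have hsolve : A' *ᵥ ((1 + c)⁻¹ • w) = z := by
    rw [Matrix.mulVec_smul, hA'def, Matrix.add_mulVec, hAw, vecMulVec_mulVec']
    have hz : z + c • z = (1 + c) • z := by module
    rw [hz, smul_smul, inv_mul_cancel₀ h1c.ne', one_smul]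
  have hinv : A'⁻¹ *ᵥ z = (1 + c)⁻¹ • w := by
    conv_lhs => rw [← hsolve]
    rw [Matrix.mulVec_mulVec, Matrix.nonsing_inv_mul A' (isUnit_det_of_posDef hA'),
      Matrix.one_mulVec]
  have ha : z ⬝ᵥ (A'⁻¹ *ᵥ z) = c / (1 + c) := by
    rw [hinv, dotProduct_smul, ← hc, smul_eq_mul]
    field_simp
  have hdet : A'.det = A.det * (1 + c) := by
    rw [hA'def, det_rank_one_update (isUnit_det_of_posDef hA), hc, hw]
  have hlog : Real.log A'.det - Real.log A.det = Real.log (1 + c) := by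
    rw [hdet, Real.log_mul hA.det_pos.ne' h1c.ne']
    ring
  rw [ha, hlog]
  have hle := Real.log_le_sub_one_of_pos (inv_pos.mpr h1c)
  rw [Real.log_inv] at hle
  have : c / (1 + c) = 1 - (1 + c)⁻¹ := by field_simp; ring
  linarith
end PosAux

lemma trace_eq_sum_eigenvalues {d : ℕ} {A : Matrix (Fin d) (Fin d) ℝ} (h : A.IsHermitian) :
    A.trace = ∑ i, h.eigenvalues i := by
  conv_lhs => rw [h.spectral_theorem]
  rw [Unitary.conjStarAlgAut_apply, Matrix.trace_mul_comm, ← Matrix.mul_assoc, Unitary.coe_star_mul_self, Matrix.one_mul,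
    Matrix.trace_diagonal]
  simp

lemma logdet_le_trace {d : ℕ} (hd : 0 < d) {A : Matrix (Fin d) (Fin d) ℝ} (hA : A.PosDef) :
    Real.log A.det ≤ d * Real.log (A.trace / d) := by
  set ev := hA.isHermitian.eigenvalues with hev
  have hpos : ∀ i, 0 < ev i := hA.eigenvalues_pos
  have hdet : A.det = ∏ i, ev i := by
    have := hA.isHermitian.det_eq_prod_eigenvalues
    simpa using this
  have htr : A.trace = ∑ i, ev i := trace_eq_sum_eigenvalues hA.isHermitian
  set m : ℝ := A.trace / d with hm
  have hsum : 0 < ∑ i, ev i := by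
    apply Finset.sum_pos (fun i _ => hpos i)
    have : Nonempty (Fin d) := Fin.pos_iff_nonempty.mp hd
    exact Finset.univ_nonempty
  have hmpos : 0 < m := by
    rw [hm, htr]
    positivity
  have hlogdet : Real.log A.det = ∑ i, Real.log (ev i) := by
    rw [hdet, Real.log_prod]
    intro i _
    exact (hpos i).ne'
  rw [hlogdet]
  have key : ∀ i : Fin d, Real.log (ev i) ≤ Real.log m + (ev i / m - 1) := by
    intro i
    have h1 := Real.log_le_sub_one_of_pos (div_pos (hpos i) hmpos)
    rw [Real.log_div (hpos i).ne' hmpos.ne'] at h1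
    linarith
  calc ∑ i, Real.log (ev i) ≤ ∑ i : Fin d, (Real.log m + (ev i / m - 1)) :=
        Finset.sum_le_sum (fun i _ => key i)
    _ = d * Real.log m + ((∑ i, ev i) / m - d) := by
        rw [Finset.sum_add_distrib, Finset.sum_sub_distrib, ← Finset.sum_div]
        simp [mul_comm]
    _ = d * Real.log m := by
        have : (∑ i, ev i) / m = d := by
          rw [hm, htr]
          field_simp
        rw [this]
        ring
    _ = d * Real.log (A.trace / d) := by rw [hm]


/-- matrix POLS regret bound.  With `G_t = λI + ∑_{s≤t} z_s z_sᵀ`,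
`B_{t-1} = ∑_{s<t} y_s z_sᵀ`, and POLS iterate `M_t = (B_{t-1} + ỹ_t z_tᵀ) G_t⁻¹`,
for every comparator `M`,
`∑‖M_t z_t − y_t‖² − ∑‖M z_t − y_t‖²
   ≤ λ‖M‖_F² + (max_t ‖y_t − ỹ_t‖²) · d · log(1 + ∑‖z_t‖²/(λd))`.
Squared Euclidean norms are written as dot products of a vector with itself, and
`‖M‖_F² = ∑ᵢⱼ M i j ^ 2`. -/
theorem matrix_pols_regret
    (d p T : ℕ) (hT : 1 ≤ T) (lam : ℝ) (hlam : 0 < lam)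
    (z : ℕ → Fin d → ℝ) (y ytil : ℕ → Fin p → ℝ)
    (G : ℕ → Matrix (Fin d) (Fin d) ℝ)
    (hG : ∀ t, G t = lam • (1 : Matrix (Fin d) (Fin d) ℝ) +
      ∑ s ∈ Finset.Icc 1 t, Matrix.vecMulVec (z s) (z s))
    (B : ℕ → Matrix (Fin p) (Fin d) ℝ)
    (hB : ∀ t, B t = ∑ s ∈ Finset.Icc 1 t, Matrix.vecMulVec (y s) (z s))
    (Mpols : ℕ → Matrix (Fin p) (Fin d) ℝ)
    (hM : ∀ t, Mpols t = (B (t - 1) + Matrix.vecMulVec (ytil t) (z t)) * (G t)⁻¹)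
    (M : Matrix (Fin p) (Fin d) ℝ) :
    ∑ t ∈ Finset.Icc 1 T,
        dotProduct ((Mpols t).mulVec (z t) - y t) ((Mpols t).mulVec (z t) - y t)
      - ∑ t ∈ Finset.Icc 1 T,
        dotProduct (M.mulVec (z t) - y t) (M.mulVec (z t) - y t)
    ≤ lam * (∑ i, ∑ j, (M i j) ^ 2)
      + ((Finset.Icc 1 T).sup' (Finset.nonempty_Icc.mpr hT)
            (fun t => dotProduct (y t - ytil t) (y t - ytil t)))
        * d * Real.log (1 + (∑ t ∈ Finset.Icc 1 T, dotProduct (z t) (z t)) / (lam * d)) := by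
  have hstarv : ∀ (x : Fin d → ℝ), star x = x := fun x => star_trivial x
  have hsup_nonneg : 0 ≤ (Finset.Icc 1 T).sup' (Finset.nonempty_Icc.mpr hT)
      (fun t => dotProduct (y t - ytil t) (y t - ytil t)) := by
    refine le_trans ?_ (Finset.le_sup' _ (Finset.mem_Icc.mpr ⟨le_refl 1, hT⟩))
    exact Finset.sum_nonneg fun i _ => mul_self_nonneg _
  rcases Nat.eq_zero_or_pos d with hd0 | hd
  · subst hd0
    have hmv : ∀ (A : Matrix (Fin p) (Fin 0) ℝ) (v : Fin 0 → ℝ), A *ᵥ v = 0 := by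
      intro A v; ext i; simp [Matrix.mulVec, dotProduct]
    simp only [hmv]
    simp [dotProduct]
  -- main case
  have hGpd : ∀ t, (G t).PosDef := by intro t; rw [hG t]; exact posDef_G lam hlam _ z
  have hGsym : ∀ t, (G t)ᵀ = G t := by
    intro t
    have h := (hGpd t).isHermitian
    rw [Matrix.IsHermitian] at h
    conv_rhs => rw [← h]
    ext i j
    simp [Matrix.conjTranspose_apply]
  have hGunit : ∀ t, IsUnit (G t).det := fun t => isUnit_det_of_posDef (hGpd t)
  have hGinvsym : ∀ t, ((G t)⁻¹)ᵀ = (G t)⁻¹ := by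
    intro t
    rw [Matrix.transpose_nonsing_inv, hGsym]
  have hGinvG : ∀ t, (G t)⁻¹ * G t = 1 := fun t => Matrix.nonsing_inv_mul _ (hGunit t)
  set N : ℕ → Matrix (Fin p) (Fin d) ℝ := fun t => B t * (G t)⁻¹ with hN
  have hNG : ∀ t, N t * G t = B t := by
    intro t; rw [hN]; dsimp only; rw [Matrix.mul_assoc, hGinvG t, Matrix.mul_one]
  set F : ℕ → Matrix (Fin p) (Fin d) ℝ → ℝ :=
    fun t A => lam * ip A A + ∑ s ∈ Finset.Icc 1 t, (A *ᵥ z s - y s) ⬝ᵥ (A *ᵥ z s - y s) with hF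
  have hFquad : ∀ t A, F t A
      = ip A (A * G t) - 2 * ip (B t) A + ∑ s ∈ Finset.Icc 1 t, y s ⬝ᵥ y s := by
    intro t A
    rw [hF]; dsimp only
    rw [hG t, hB t]
    rw [Matrix.mul_add, ip_add_right, Matrix.mul_sum, ip_sum_right, ip_sum_left]
    have hsm : A * (lam • (1 : Matrix (Fin d) (Fin d) ℝ)) = lam • A := by
      rw [Matrix.mul_smul, Matrix.mul_one]
    rw [hsm, ip_smul_right]
    have hexp : ∀ s, (A *ᵥ z s - y s) ⬝ᵥ (A *ᵥ z s - y s)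
        = ip A (A * Matrix.vecMulVec (z s) (z s)) - 2 * ip (Matrix.vecMulVec (y s) (z s)) A
          + y s ⬝ᵥ y s := fun s => residual_expand A (z s) (y s)
    rw [Finset.sum_congr rfl (fun s _ => hexp s)]
    rw [Finset.sum_add_distrib, Finset.sum_sub_distrib, ← Finset.mul_sum]
    ring
  have hmin : ∀ t A, F t A = F t (N t) + ip (A - N t) ((A - N t) * G t) := by
    intro t A
    rw [hFquad t A, hFquad t (N t), ip_quad_identity (hGsym t) A (N t), hNG t,
      ip_comm (N t) (B t)]
    ring
  have hminle : ∀ t A, F t (N t) ≤ F t A := by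
    intro t A
    rw [hmin t A]
    have := quad_nonneg (hGpd t).posSemidef (A - N t)
    linarith
  have h1le : ∀ k : ℕ, 1 ≤ k + 1 := fun k => Nat.le_add_left 1 k
  have hBrec : ∀ k, B (k+1) = B k + Matrix.vecMulVec (y (k+1)) (z (k+1)) := by
    intro k; rw [hB, hB, Finset.sum_Icc_succ_top (h1le k)]
  have hGrec : ∀ k, G (k+1) = G k + Matrix.vecMulVec (z (k+1)) (z (k+1)) := by
    intro k; rw [hG, hG, Finset.sum_Icc_succ_top (h1le k), add_assoc]
  have hFrec : ∀ k A, F (k+1) A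
      = F k A + (A *ᵥ z (k+1) - y (k+1)) ⬝ᵥ (A *ᵥ z (k+1) - y (k+1)) := by
    intro k A
    rw [hF]; dsimp only
    rw [Finset.sum_Icc_succ_top (h1le k)]
    ring
  set r : ℕ → Fin p → ℝ := fun t => y t - ytil t with hrdef
  set a : ℕ → ℝ := fun t => z t ⬝ᵥ ((G t)⁻¹ *ᵥ z t) with hadef
  have hanonneg : ∀ t, 0 ≤ a t := by
    intro t
    have h := ((hGpd t).inv).posSemidef.dotProduct_mulVec_nonneg (z t)
    rwa [hstarv] at h
  have hMpols : ∀ k, Mpols (k+1) - N (k+1)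
      = -(Matrix.vecMulVec (r (k+1)) (z (k+1)) * (G (k+1))⁻¹) := by
    intro k
    rw [hM (k+1), hN]; dsimp only
    rw [Nat.add_sub_cancel, hBrec k, ← Matrix.sub_mul, ← Matrix.neg_mul]
    congr 1
    rw [hrdef]; dsimp only
    rw [vecMulVec_sub_left]
    abel
  have hipterm : ∀ k, ip (Mpols (k+1) - N (k+1)) ((Mpols (k+1) - N (k+1)) * G (k+1))
      = (r (k+1) ⬝ᵥ r (k+1)) * a (k+1) := by
    intro k
    rw [hMpols k, Matrix.neg_mul, Matrix.mul_assoc, hGinvG (k+1), Matrix.mul_one]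
    have hneg : ip (-(Matrix.vecMulVec (r (k+1)) (z (k+1)) * (G (k+1))⁻¹))
        (-(Matrix.vecMulVec (r (k+1)) (z (k+1))))
        = ip (Matrix.vecMulVec (r (k+1)) (z (k+1)) * (G (k+1))⁻¹)
            (Matrix.vecMulVec (r (k+1)) (z (k+1))) := by
      simp [ip]
    rw [hneg, ip_outer]
    congr 1
    rw [hadef]; dsimp only
    conv_lhs => rw [← hGinvsym (k+1), Matrix.vecMul_transpose]
    rw [dotProduct_comm]
  set f : ℕ → ℝ := fun t => F t (N t) with hfdef
  have hstep : ∀ k, (Mpols (k+1) *ᵥ z (k+1) - y (k+1)) ⬝ᵥ (Mpols (k+1) *ᵥ z (k+1) - y (k+1))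
      ≤ f (k+1) - f k + (r (k+1) ⬝ᵥ r (k+1)) * a (k+1) := by
    intro k
    have e1 : F (k+1) (Mpols (k+1)) = f (k+1) + (r (k+1) ⬝ᵥ r (k+1)) * a (k+1) := by
      rw [hmin (k+1) (Mpols (k+1)), hipterm k, hfdef]
    have e2 := hFrec k (Mpols (k+1))
    have e3 : f k ≤ F k (Mpols (k+1)) := hminle k _
    rw [hfdef] at e3 ⊢
    dsimp only at e1 e3 ⊢
    linarith
  have hsumIcc : ∀ (g : ℕ → ℝ), ∑ t ∈ Finset.Icc 1 T, g t = ∑ k ∈ Finset.range T, g (k+1) := by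
    intro g
    rw [← Finset.Ico_add_one_right_eq_Icc, Finset.sum_Ico_eq_sum_range]
    simp [Nat.add_comm]
  have hf0 : f 0 = 0 := by
    have hB0 : B 0 = 0 := by rw [hB]; simp
    rw [hfdef]; dsimp only
    rw [hN]; dsimp only
    rw [hB0, Matrix.zero_mul, hF]; dsimp only
    simp [ip]
  have hmain1 : ∑ t ∈ Finset.Icc 1 T, (Mpols t *ᵥ z t - y t) ⬝ᵥ (Mpols t *ᵥ z t - y t)
      ≤ f T - f 0 + ∑ t ∈ Finset.Icc 1 T, (r t ⬝ᵥ r t) * a t := by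
    rw [hsumIcc, hsumIcc]
    calc ∑ k ∈ Finset.range T, (Mpols (k+1) *ᵥ z (k+1) - y (k+1)) ⬝ᵥ (Mpols (k+1) *ᵥ z (k+1) - y (k+1))
        ≤ ∑ k ∈ Finset.range T, (f (k+1) - f k + (r (k+1) ⬝ᵥ r (k+1)) * a (k+1)) :=
          Finset.sum_le_sum (fun k _ => hstep k)
      _ = (∑ k ∈ Finset.range T, (f (k+1) - f k))
            + ∑ k ∈ Finset.range T, (r (k+1) ⬝ᵥ r (k+1)) * a (k+1) := Finset.sum_add_distrib
      _ = f T - f 0 + ∑ k ∈ Finset.range T, (r (k+1) ⬝ᵥ r (k+1)) * a (k+1) := by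
          rw [Finset.sum_range_sub]
  have hfT : f T ≤ lam * ip M M
      + ∑ t ∈ Finset.Icc 1 T, (M *ᵥ z t - y t) ⬝ᵥ (M *ᵥ z t - y t) := hminle T M
  set R := (Finset.Icc 1 T).sup' (Finset.nonempty_Icc.mpr hT)
      (fun t => dotProduct (y t - ytil t) (y t - ytil t)) with hRdef
  have hrR : ∀ t ∈ Finset.Icc 1 T, (r t) ⬝ᵥ (r t) ≤ R := by
    intro t ht
    exact Finset.le_sup' (fun t => dotProduct (y t - ytil t) (y t - ytil t)) ht
  have hsum2 : ∑ t ∈ Finset.Icc 1 T, (r t ⬝ᵥ r t) * a t ≤ R * ∑ t ∈ Finset.Icc 1 T, a t := by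
    rw [Finset.mul_sum]
    exact Finset.sum_le_sum fun t ht => mul_le_mul_of_nonneg_right (hrR t ht) (hanonneg t)
  have hastep : ∀ k, a (k+1) ≤ Real.log (G (k+1)).det - Real.log (G k).det := by
    intro k
    have h := step_log (hGpd k) (z (k+1)) (by rw [← hGrec k]; exact hGpd (k+1))
    rw [← hGrec k] at h
    exact h
  have hsuma : ∑ t ∈ Finset.Icc 1 T, a t ≤ Real.log (G T).det - Real.log (G 0).det := by
    rw [hsumIcc]
    calc ∑ k ∈ Finset.range T, a (k+1)
        ≤ ∑ k ∈ Finset.range T, (Real.log (G (k+1)).det - Real.log (G k).det) :=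
          Finset.sum_le_sum (fun k _ => hastep k)
      _ = Real.log (G T).det - Real.log (G 0).det :=
          Finset.sum_range_sub (fun t => Real.log (G t).det) T
  have hdpos : (0:ℝ) < d := by exact_mod_cast hd
  have hG0 : (G 0).det = lam ^ d := by
    rw [hG 0]
    simp [Matrix.det_smul]
  set S := ∑ t ∈ Finset.Icc 1 T, dotProduct (z t) (z t) with hSdef
  have hSnn : 0 ≤ S := by
    rw [hSdef]
    exact Finset.sum_nonneg fun t _ => Finset.sum_nonneg fun i _ => mul_self_nonneg _
  have htrace : (G T).trace = lam * d + S := by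
    rw [hG T, Matrix.trace_add, Matrix.trace_smul, Matrix.trace_one, Matrix.trace_sum, hSdef]
    have hvv : ∀ t : ℕ, Matrix.trace (Matrix.vecMulVec (z t) (z t)) = dotProduct (z t) (z t) := by
      intro t
      simp [Matrix.trace, Matrix.diag, Matrix.vecMulVec_apply, dotProduct]
    rw [Finset.sum_congr rfl (fun t _ => hvv t)]
    simp
  have htrpos : 0 < (G T).trace / d := by
    rw [htrace]
    positivity
  have hlogchain : Real.log (G T).det - Real.log (G 0).det
      ≤ d * Real.log (1 + S / (lam * d)) := by
    have h1 := logdet_le_trace hd (hGpd T)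
    have h2 : Real.log (G 0).det = d * Real.log lam := by rw [hG0, Real.log_pow]
    have h4 : Real.log ((G T).trace / d) - Real.log lam = Real.log (1 + S / (lam * d)) := by
      rw [← Real.log_div htrpos.ne' hlam.ne']
      congr 1
      rw [htrace]
      field_simp
    have h5 : (d:ℝ) * Real.log ((G T).trace / d) - d * Real.log lam
        = d * Real.log (1 + S / (lam * d)) := by
      rw [← h4]; ring
    rw [h2]
    linarith
  have hipM : ip M M = ∑ i, ∑ j, (M i j) ^ 2 := by
    simp [ip, sq]
  have hfinal2 : R * ∑ t ∈ Finset.Icc 1 T, a t ≤ R * (d * Real.log (1 + S / (lam * d))) :=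
    mul_le_mul_of_nonneg_left (le_trans hsuma hlogchain) hsup_nonneg
  have goal1 : ∑ t ∈ Finset.Icc 1 T, (Mpols t *ᵥ z t - y t) ⬝ᵥ (Mpols t *ᵥ z t - y t)
      - ∑ t ∈ Finset.Icc 1 T, (M *ᵥ z t - y t) ⬝ᵥ (M *ᵥ z t - y t)
      ≤ lam * (∑ i, ∑ j, (M i j) ^ 2) + R * d * Real.log (1 + S / (lam * d)) := by
    have hra : R * (d * Real.log (1 + S / (lam * d))) = R * d * Real.log (1 + S / (lam * d)) := by
      ring
    rw [← hipM]
    linarith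
  exact goal1
end

section
/- Let z_t ∈ ℝ^d for t = 1,…,T, let λ > 0, and define G_0 := λ I and G_t := G_{t-1} + z_t z_tᵀ. Then ∑_{t=1}^T z_tᵀ G_t⁻¹ z_t ≤ log(det G_T / det G_0) ≤ d · log(1 + (∑_{t=1}^T ‖z_t‖²)/(λ d)). -/
open Matrix


lemma EP.vecMulVec_mulVec' {d : ℕ} (u v w : Fin d → ℝ) :
    (vecMulVec u v) *ᵥ w = (v ⬝ᵥ w) • u := by
  funext i
  simp [mulVec, vecMulVec_apply, dotProduct, Finset.mul_sum, Finset.sum_mul]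
  ring_nf

lemma EP.psd_vecMulVec {d : ℕ} (v : Fin d → ℝ) : (vecMulVec v v).PosSemidef := by
  refine PosSemidef.of_dotProduct_mulVec_nonneg ?_ ?_
  · ext i j; simp [conjTranspose_apply, vecMulVec_apply, mul_comm]
  · intro x
    rw [EP.vecMulVec_mulVec', star_trivial, dotProduct_smul]
    simpa [dotProduct_comm] using mul_self_nonneg (v ⬝ᵥ x)

lemma EP.det_step {d : ℕ} {A : Matrix (Fin d) (Fin d) ℝ} (hA : A.PosDef) (v : Fin d → ℝ) :
    (A + vecMulVec v v).det = A.det * (1 + v ⬝ᵥ (A⁻¹ *ᵥ v)) := by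
  have hu : IsUnit A.det := isUnit_iff_ne_zero.mpr hA.det_pos.ne'
  rw [vecMulVec_eq Unit, det_add_replicateCol_mul_replicateRow hu]
  congr 1
  rw [det_unique]
  simp [Matrix.add_apply, Matrix.one_apply, Matrix.mul_apply, mulVec, dotProduct,
    Finset.mul_sum, Finset.sum_mul]
  rw [Finset.sum_comm]
  exact Finset.sum_congr rfl fun i _ => Finset.sum_congr rfl fun j _ => by ring

lemma EP.inv_step {d : ℕ} {A : Matrix (Fin d) (Fin d) ℝ} (hA : A.PosDef) (v : Fin d → ℝ)
    (hs : 0 ≤ v ⬝ᵥ (A⁻¹ *ᵥ v)) (hB : (A + vecMulVec v v).PosDef) :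
    v ⬝ᵥ ((A + vecMulVec v v)⁻¹ *ᵥ v)
      = (v ⬝ᵥ (A⁻¹ *ᵥ v)) / (1 + v ⬝ᵥ (A⁻¹ *ᵥ v)) := by
  set s := v ⬝ᵥ (A⁻¹ *ᵥ v) with hsdef
  have hu : IsUnit A.det := isUnit_iff_ne_zero.mpr hA.det_pos.ne'
  have huB : IsUnit (A + vecMulVec v v).det := isUnit_iff_ne_zero.mpr hB.det_pos.ne'
  have key : (A + vecMulVec v v) *ᵥ (A⁻¹ *ᵥ v) = (1 + s) • v := by
    rw [add_mulVec, mulVec_mulVec, mul_nonsing_inv _ hu, one_mulVec, EP.vecMulVec_mulVec']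
    rw [add_smul, one_smul]
  have key2 : (1 + s) • ((A + vecMulVec v v)⁻¹ *ᵥ v) = A⁻¹ *ᵥ v := by
    rw [← mulVec_smul, ← key, mulVec_mulVec, nonsing_inv_mul _ huB, one_mulVec]
  have h1s : (0:ℝ) < 1 + s := by linarith
  have := congrArg (fun w => v ⬝ᵥ w) key2
  simp only [dotProduct_smul, smul_eq_mul] at this
  rw [eq_div_iff h1s.ne']
  linarith [this]

lemma EP.trace_eq_sum_eig {d : ℕ} {A : Matrix (Fin d) (Fin d) ℝ} (hA : A.IsHermitian) :
    A.trace = ∑ i, hA.eigenvalues i := by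
  simpa using hA.trace_eq_sum_eigenvalues

lemma EP.det_le_pow {d : ℕ} (hd : 0 < d) {A : Matrix (Fin d) (Fin d) ℝ} (hA : A.PosDef) :
    A.det ≤ (A.trace / d) ^ d := by
  have hH := hA.isHermitian
  set μ := hH.eigenvalues with hμ
  have hpos : ∀ i, 0 < μ i := fun i => hA.eigenvalues_pos i
  have hdet : A.det = ∏ i, μ i := by
    rw [hH.det_eq_prod_eigenvalues]; norm_num; rfl
  have htr : A.trace = ∑ i, μ i := EP.trace_eq_sum_eig hH
  have hd' : (d:ℝ) ≠ 0 := Nat.cast_ne_zero.mpr hd.ne'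
  have hgm := Real.geom_mean_le_arith_mean_weighted Finset.univ (fun _ => 1/(d:ℝ)) μ
    (fun i _ => by positivity)
    (by simp [Finset.card_univ, mul_comm]; field_simp)
    (fun i _ => (hpos i).le)
  have hP : (0:ℝ) < ∏ i, μ i := Finset.prod_pos fun i _ => hpos i
  have hprod : ∏ i : Fin d, μ i ^ (1/(d:ℝ)) = (∏ i, μ i) ^ (1/(d:ℝ)) :=
    (Real.finset_prod_rpow Finset.univ μ (fun i _ => (hpos i).le) _)
  rw [hprod] at hgm
  have hsum : ∑ i : Fin d, 1/(d:ℝ) * μ i = (∑ i, μ i) / d := by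
    rw [← Finset.mul_sum]; ring
  rw [hsum] at hgm
  have hmono := pow_le_pow_left₀ (Real.rpow_nonneg hP.le _) hgm d
  rw [← Real.rpow_natCast ((∏ i, μ i) ^ (1/(d:ℝ))) d, ← Real.rpow_mul hP.le] at hmono
  rw [one_div, inv_mul_cancel₀ hd', Real.rpow_one] at hmono
  rw [hdet, htr]
  exact hmono

/-- the elliptical potential lemma.  With `G_0 = λI` and
`G_t = G_{t-1} + z_t z_tᵀ`,
`∑_{t=1}^T z_tᵀ G_t⁻¹ z_t ≤ log(det G_T / det G_0) ≤ d log(1 + ∑‖z_t‖²/(λd))`. -/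
theorem elliptical_potential
    (d T : ℕ) (lam : ℝ) (hlam : 0 < lam)
    (z : ℕ → Fin d → ℝ)
    (G : ℕ → Matrix (Fin d) (Fin d) ℝ)
    (hG0 : G 0 = lam • (1 : Matrix (Fin d) (Fin d) ℝ))
    (hGsucc : ∀ t : ℕ, 1 ≤ t → G t = G (t - 1) + Matrix.vecMulVec (z t) (z t)) :
    (∑ t ∈ Finset.Icc 1 T, dotProduct (z t) ((G t)⁻¹.mulVec (z t))
        ≤ Real.log ((G T).det / (G 0).det)) ∧
    Real.log ((G T).det / (G 0).det)
        ≤ d * Real.log (1 + (∑ t ∈ Finset.Icc 1 T, dotProduct (z t) (z t)) / (lam * d)) := by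
  rcases Nat.eq_zero_or_pos d with hd | hd
  · subst hd
    simp [Matrix.det_isEmpty, dotProduct]
  have hPD : ∀ t, (G t).PosDef := by
    intro t
    induction t with
    | zero => rw [hG0, smul_one_eq_diagonal]; exact Matrix.PosDef.diagonal fun i => hlam
    | succ n ih =>
      have h := hGsucc (n+1) (Nat.le_add_left 1 n)
      simp only [Nat.add_sub_cancel] at h
      rw [h]; exact ih.add_posSemidef (EP.psd_vecMulVec _)
  set s : ℕ → ℝ := fun t => z t ⬝ᵥ ((G (t-1))⁻¹ *ᵥ z t) with hs
  have hs0 : ∀ t, 0 ≤ s t := fun t => by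
    have := (hPD (t-1)).inv.posSemidef.dotProduct_mulVec_nonneg (z t)
    simpa using this
  have hdet : ∀ t, 1 ≤ t → (G t).det = (G (t-1)).det * (1 + s t) := fun t ht => by
    rw [hGsucc t ht]; exact EP.det_step (hPD (t-1)) (z t)
  have hquad : ∀ t, 1 ≤ t → z t ⬝ᵥ ((G t)⁻¹ *ᵥ z t) = s t / (1 + s t) := fun t ht => by
    rw [hGsucc t ht]
    exact EP.inv_step (hPD (t-1)) (z t) (hs0 t) (by rw [← hGsucc t ht]; exact hPD t)
  have hlogstep : ∀ t, 1 ≤ t →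
      Real.log (G t).det = Real.log (G (t-1)).det + Real.log (1 + s t) := fun t ht => by
    rw [hdet t ht, Real.log_mul (hPD (t-1)).det_pos.ne' (by nlinarith [hs0 t])]
  have hterm : ∀ t, s t / (1 + s t) ≤ Real.log (1 + s t) := fun t => by
    have h1 : (0:ℝ) < 1 + s t := by linarith [hs0 t]
    have h2 := Real.log_le_sub_one_of_pos (x := (1 + s t)⁻¹) (by positivity)
    rw [Real.log_inv] at h2
    have heq : s t / (1 + s t) = 1 - (1 + s t)⁻¹ := by field_simp; ring
    linarith
  have h1 : ∀ N : ℕ, ∑ t ∈ Finset.Icc 1 N, z t ⬝ᵥ ((G t)⁻¹ *ᵥ z t)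
      ≤ Real.log (G N).det - Real.log (G 0).det := by
    intro N
    induction N with
    | zero => simp
    | succ n ih =>
      rw [Finset.sum_Icc_succ_top (Nat.le_add_left 1 n)]
      have hls := hlogstep (n+1) (Nat.le_add_left 1 n)
      simp only [Nat.add_sub_cancel] at hls
      rw [hquad (n+1) (Nat.le_add_left 1 n), hls]
      linarith [hterm (n+1)]
  have hdiv : Real.log ((G T).det / (G 0).det)
      = Real.log (G T).det - Real.log (G 0).det :=
    Real.log_div (hPD T).det_pos.ne' (hPD 0).det_pos.ne'
  have htr : ∀ N, (G N).trace = lam * d + ∑ t ∈ Finset.Icc 1 N, z t ⬝ᵥ z t := by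
    intro N
    induction N with
    | zero => rw [hG0, Matrix.trace_smul, Matrix.trace_one]; simp
    | succ n ih =>
      have h := hGsucc (n+1) (Nat.le_add_left 1 n)
      simp only [Nat.add_sub_cancel] at h
      rw [Finset.sum_Icc_succ_top (Nat.le_add_left 1 n), h, Matrix.trace_add, ih]
      have hv : (vecMulVec (z (n+1)) (z (n+1))).trace = z (n+1) ⬝ᵥ z (n+1) := by
        simp [Matrix.trace, Matrix.diag, vecMulVec_apply, dotProduct]
      rw [hv]; ring
  set S := ∑ t ∈ Finset.Icc 1 T, z t ⬝ᵥ z t with hSdef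
  have hS0 : 0 ≤ S := Finset.sum_nonneg fun t _ => by
    simpa [dotProduct] using Finset.sum_nonneg fun i _ => mul_self_nonneg (z t i)
  have hd' : (0:ℝ) < d := Nat.cast_pos.mpr hd
  have htrT := htr T
  have htrpos : (0:ℝ) < (G T).trace := by rw [htrT]; nlinarith
  have h2 : Real.log (G T).det - Real.log (G 0).det
      ≤ d * Real.log (1 + S / (lam * d)) := by
    have hdetle := EP.det_le_pow hd (hPD T)
    have hG0det : (G 0).det = lam ^ d := by
      rw [hG0, Matrix.det_smul, Matrix.det_one]; simp
    have htrd : (0:ℝ) < (G T).trace / d := by positivity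
    have hlog1 : Real.log (G T).det ≤ d * Real.log ((G T).trace / d) := by
      calc Real.log (G T).det ≤ Real.log (((G T).trace / d)^d) :=
            Real.log_le_log (hPD T).det_pos hdetle
        _ = d * Real.log ((G T).trace / d) := by rw [Real.log_pow]
    have hlog0 : Real.log (G 0).det = d * Real.log lam := by rw [hG0det, Real.log_pow]
    have key : Real.log ((G T).trace / d) - Real.log lam = Real.log (1 + S/(lam*d)) := by
      have hrw : (G T).trace / ↑d / lam = 1 + S / (lam * ↑d) := by
        rw [htrT, div_div, add_div, mul_comm (d:ℝ) lam,
          div_self (mul_pos hlam hd').ne']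
      rw [← Real.log_div htrd.ne' hlam.ne', hrw]
    have hfin : Real.log (G T).det - Real.log (G 0).det
        ≤ (d:ℝ) * (Real.log ((G T).trace/d) - Real.log lam) := by
      rw [mul_sub]; linarith
    rw [key] at hfin
    exact hfin
  exact ⟨hdiv ▸ h1 T, hdiv ▸ h2⟩
end

section
/- Let z_s ∈ ℝ^d, y_s ∈ ℝ^p for s = 1,…,t, let λ > 0, and set G_t := λ I + ∑_{s=1}^t z_s z_sᵀ, G_{t-1} := λ I + ∑_{s=1}^{t-1} z_s z_sᵀ, and B_{t-1} := ∑_{s=1}^{t-1} y_s z_sᵀ. Then M := B_{t-1} G_{t-1}⁻¹ is the unique matrix in ℝ^{p×d} satisfying the fixed-point equation M = (B_{t-1} + (M z_t) z_tᵀ) G_t⁻¹. Consequently, setting the self-consistent hint ỹ_t := M_t^{pols} z_t in the POLS iterate M_t^{pols} := (B_{t-1} + ỹ_t z_tᵀ) G_t⁻¹ recovers the standard regularized online least squares iterate M_t^{ols} := B_{t-1} G_{t-1}⁻¹. -/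
open Matrix

/-- the self-consistent hint recovers OLS.  With
`G_t = λI + ∑_{s=1}^t z_s z_sᵀ`, `G_{t-1} = λI + ∑_{s=1}^{t-1} z_s z_sᵀ`, and
`B_{t-1} = ∑_{s=1}^{t-1} y_s z_sᵀ`, the matrix `M = B_{t-1} G_{t-1}⁻¹` is the unique
solution of the fixed-point equation `M = (B_{t-1} + (M z_t) z_tᵀ) G_t⁻¹`; hence the
POLS iterate with the self-consistent hint `ỹ_t = M_t^{pols} z_t` is exactly the
regularized OLS iterate `M_t^{ols} = B_{t-1} G_{t-1}⁻¹`. -/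
theorem pols_self_consistent_hint_is_ols
    (d p t : ℕ) (ht : 1 ≤ t) (lam : ℝ) (hlam : 0 < lam)
    (z : ℕ → Fin d → ℝ) (y : ℕ → Fin p → ℝ)
    (Gt Gt1 : Matrix (Fin d) (Fin d) ℝ) (B : Matrix (Fin p) (Fin d) ℝ)
    (hGt : Gt = lam • (1 : Matrix (Fin d) (Fin d) ℝ) +
      ∑ s ∈ Finset.Icc 1 t, Matrix.vecMulVec (z s) (z s))
    (hGt1 : Gt1 = lam • (1 : Matrix (Fin d) (Fin d) ℝ) +
      ∑ s ∈ Finset.Icc 1 (t - 1), Matrix.vecMulVec (z s) (z s))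
    (hB : B = ∑ s ∈ Finset.Icc 1 (t - 1), Matrix.vecMulVec (y s) (z s)) :
    ∀ M : Matrix (Fin p) (Fin d) ℝ,
      M = (B + Matrix.vecMulVec (M.mulVec (z t)) (z t)) * Gt⁻¹ ↔ M = B * Gt1⁻¹ := by
  -- positive definiteness
  have hpd : ∀ (S : Finset ℕ),
      (lam • (1 : Matrix (Fin d) (Fin d) ℝ) +
        ∑ s ∈ S, Matrix.vecMulVec (z s) (z s)).PosDef := by
    intro S
    have h1 : (lam • (1 : Matrix (Fin d) (Fin d) ℝ)).PosDef := by
      rw [Matrix.smul_one_eq_diagonal]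
      exact (Matrix.posDef_diagonal_iff).2 fun i => hlam
    have h2 : (∑ s ∈ S, Matrix.vecMulVec (z s) (z s)).PosSemidef := by
      refine Finset.sum_induction _ _ (fun a b ha hb => ha.add hb)
        (Matrix.PosSemidef.zero) ?_
      intro s _
      have : Matrix.vecMulVec (z s) (z s) =
          (Matrix.replicateRow Unit (z s))ᴴ * Matrix.replicateRow Unit (z s) := by
        rw [Matrix.vecMulVec_eq Unit]
        rfl
      rw [this]
      exact Matrix.posSemidef_conjTranspose_mul_self _
    exact h1.add_posSemidef h2
  have hGtpd : Gt.PosDef := hGt ▸ hpd _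
  have hGt1pd : Gt1.PosDef := hGt1 ▸ hpd _
  have hGtu : IsUnit Gt.det := (Matrix.isUnit_iff_isUnit_det _).1 hGtpd.isUnit
  have hGt1u : IsUnit Gt1.det := (Matrix.isUnit_iff_isUnit_det _).1 hGt1pd.isUnit
  -- Gt = Gt1 + z_t z_tᵀ
  have hsplit : Gt = Gt1 + Matrix.vecMulVec (z t) (z t) := by
    rw [hGt, hGt1]
    have ht' : t - 1 + 1 = t := Nat.succ_pred_eq_of_pos ht
    rw [show Finset.Icc 1 t = Finset.Icc 1 (t - 1 + 1) by rw [ht'],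
      Finset.sum_Icc_succ_top (by omega), ht', add_assoc]
  have hmv : ∀ M : Matrix (Fin p) (Fin d) ℝ,
      Matrix.vecMulVec (M.mulVec (z t)) (z t) = M * Matrix.vecMulVec (z t) (z t) := by
    intro M
    ext i j
    simp [Matrix.vecMulVec_apply, Matrix.mul_apply, Matrix.mulVec, dotProduct,
      Finset.sum_mul, mul_assoc]
  intro M
  constructor
  · intro h
    have h2 : M * Gt = B + Matrix.vecMulVec (M.mulVec (z t)) (z t) := by
      calc M * Gt = (B + Matrix.vecMulVec (M.mulVec (z t)) (z t)) * Gt⁻¹ * Gt := by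
            rw [← h]
        _ = B + Matrix.vecMulVec (M.mulVec (z t)) (z t) := by
            rw [Matrix.mul_assoc, Matrix.nonsing_inv_mul _ hGtu, Matrix.mul_one]
    have h3 : M * Gt1 = B := by
      have := h2
      rw [hsplit, hmv, Matrix.mul_add] at this
      have := add_right_cancel this
      exact this
    calc M = M * Gt1 * Gt1⁻¹ := by
          rw [Matrix.mul_assoc, Matrix.mul_nonsing_inv _ hGt1u, Matrix.mul_one]
      _ = B * Gt1⁻¹ := by rw [h3]
  · intro h
    have h3 : M * Gt1 = B := by
      rw [h, Matrix.mul_assoc, Matrix.nonsing_inv_mul _ hGt1u, Matrix.mul_one]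
    have h2 : M * Gt = B + Matrix.vecMulVec (M.mulVec (z t)) (z t) := by
      rw [hsplit, hmv, Matrix.mul_add, h3]
    calc M = M * Gt * Gt⁻¹ := by
          rw [Matrix.mul_assoc, Matrix.mul_nonsing_inv _ hGtu, Matrix.mul_one]
      _ = (B + Matrix.vecMulVec (M.mulVec (z t)) (z t)) * Gt⁻¹ := by rw [h2]
end

section
/- Under the system assumptions, let L ∈ ℝ^{n×p} satisfy ‖L‖ ≤ κ and let A_L := A − LC be (κ, γ)-strongly stable, and let ŷ_t^{TR}(L) := ∑_{k=0}^{H-1} C A_L^k L y_{t-k-1}. If H ≥ ⌈γ⁻¹(r+1) log(1+T)⌉, then ∑_{t=1}^T ‖ŷ_t^{LB}(L) − ŷ_t^{TR}(L)‖ ≤ C_trun and ∑_{t=1}^T ‖ŷ_t^{LB}(L) − ŷ_t^{TR}(L)‖² ≤ C_trun², where C_trun := γ⁻¹ ‖C‖ κ² C_y and C_y := ‖C‖ κ_A C_w + C_v. -/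
/-- The operator norm of a matrix induced by the Euclidean (ℓ²) norms.  For a column
matrix (a vector), this is the Euclidean norm of the vector. -/
noncomputable def opNorm {𝕜 : Type*} [RCLike 𝕜] {m n : Type*} [Fintype m] [Fintype n]
    [DecidableEq n] (A : Matrix m n 𝕜) : ℝ :=
  ‖LinearMap.toContinuousLinearMap (Matrix.toEuclideanLin A)‖

/-- The nilpotent upper shift matrix: `N i (i+1) = 1`, all other entries `0`. -/
def shiftMatrix (K : Type*) [Ring K] (m : ℕ) : Matrix (Fin m) (Fin m) K :=
  Matrix.of fun i j => if (i : ℕ) + 1 = (j : ℕ) then 1 else 0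

/-- The Jordan block `λ I + N` of size `m` with eigenvalue `λ`. -/
noncomputable def jordanBlock (K : Type*) [Ring K] (lam : K) (m : ℕ) :
    Matrix (Fin m) (Fin m) K :=
  lam • (1 : Matrix (Fin m) (Fin m) K) + shiftMatrix K m

/-- `A = S J S⁻¹` over `ℂ`, where `J` is block diagonal with Jordan blocks of size at
most `r` whose eigenvalues have absolute value at most `1`, and `κA = ‖S‖ ‖S⁻¹‖`. -/
def HasJordanForm (n r : ℕ) (A : Matrix (Fin n) (Fin n) ℝ) (κA : ℝ) : Prop :=
  ∃ (b : ℕ) (msize : Fin b → ℕ) (lam : Fin b → ℂ)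
    (S : Matrix (Fin n) ((i : Fin b) × Fin (msize i)) ℂ)
    (S' : Matrix ((i : Fin b) × Fin (msize i)) (Fin n) ℂ),
      (∀ i, msize i ≤ r) ∧ (∀ i, ‖lam i‖ ≤ 1) ∧
      S * S' = 1 ∧ S' * S = 1 ∧
      A.map (Complex.ofReal) =
        S * Matrix.blockDiagonal' (fun i => jordanBlock ℂ (lam i) (msize i)) * S' ∧
      κA = opNorm S * opNorm S'

/-- `B` is `(κ, γ)`-strongly stable: `B = P Q P⁻¹` with `‖Q‖ ≤ 1 - γ` and
`‖P‖‖P⁻¹‖ ≤ κ`, for some `κ > 0` and `γ ∈ (0, 1]`. -/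
def StronglyStable (n : ℕ) (κ γ : ℝ) (B : Matrix (Fin n) (Fin n) ℝ) : Prop :=
  0 < κ ∧ 0 < γ ∧ γ ≤ 1 ∧
  ∃ P Q : Matrix (Fin n) (Fin n) ℝ,
    B = P * Q * P⁻¹ ∧ opNorm Q ≤ 1 - γ ∧ opNorm P * opNorm P⁻¹ ≤ κ

open scoped Matrix.Norms.L2Operator
open Matrix

section Helpers

variable {𝕜 : Type*} [RCLike 𝕜] {m n l : Type*} [Fintype m] [Fintype n] [Fintype l]
  [DecidableEq n] [DecidableEq l]

lemma opNorm_eq (A : Matrix m n 𝕜) : opNorm A = ‖A‖ := rfl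

lemma vec_norm_sq (u : Matrix m (Fin 1) 𝕜) : ‖u‖ ^ 2 = ∑ i, ‖u i 0‖ ^ 2 := by
  have hone : ‖(1 : Matrix (Fin 1) (Fin 1) 𝕜)‖ = 1 := by
    rw [Matrix.cstar_norm_def, _root_.map_one]
    exact ContinuousLinearMap.norm_id
  have h1 : uᴴ * u = (((∑ i, ‖u i 0‖ ^ 2 : ℝ) : 𝕜)) • (1 : Matrix (Fin 1) (Fin 1) 𝕜) := by
    ext a b
    fin_cases a; fin_cases b
    simp [Matrix.mul_apply, Matrix.conjTranspose_apply, RCLike.conj_mul]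
  have h2 := Matrix.l2_opNorm_conjTranspose_mul_self u
  rw [h1, norm_smul, hone] at h2
  have h3 : ‖(((∑ i, ‖u i 0‖ ^ 2 : ℝ) : 𝕜))‖ = ∑ i, ‖u i 0‖ ^ 2 := by
    rw [RCLike.norm_ofReal, abs_of_nonneg]
    positivity
  rw [h3, mul_one] at h2
  rw [sq, ← h2]

lemma vecnorm_map_ofReal (u : Matrix m (Fin 1) ℝ) : ‖u.map Complex.ofReal‖ = ‖u‖ := by
  have h1 : ‖u.map Complex.ofReal‖ ^ 2 = ‖u‖ ^ 2 := by
    rw [vec_norm_sq, vec_norm_sq]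
    exact Finset.sum_congr rfl fun i _ => by simp [Matrix.map_apply]
  have h2 : (0:ℝ) ≤ ‖u.map Complex.ofReal‖ := norm_nonneg _
  have h3 : (0:ℝ) ≤ ‖u‖ := norm_nonneg _
  nlinarith

lemma mulVec_sq_le (M : Matrix m n 𝕜) (xv : n → 𝕜) :
    ∑ i, ‖M.mulVec xv i‖ ^ 2 ≤ ‖M‖ ^ 2 * ∑ j, ‖xv j‖ ^ 2 := by
  have h := Matrix.l2_opNorm_mulVec M ((WithLp.equiv 2 (n → 𝕜)).symm xv)
  have e1 : ‖(EuclideanSpace.equiv m 𝕜).symm (M *ᵥ ((WithLp.equiv 2 (n → 𝕜)).symm xv : EuclideanSpace 𝕜 n))‖ ^ 2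
      = ∑ i, ‖M.mulVec xv i‖ ^ 2 := by
    rw [EuclideanSpace.norm_eq]
    rw [Real.sq_sqrt (by positivity)]
    rfl
  have e2 : ‖((WithLp.equiv 2 (n → 𝕜)).symm xv : EuclideanSpace 𝕜 n)‖ ^ 2 = ∑ j, ‖xv j‖ ^ 2 := by
    rw [EuclideanSpace.norm_eq, Real.sq_sqrt (by positivity)]
    rfl
  calc ∑ i, ‖M.mulVec xv i‖ ^ 2 = _ := e1.symm
    _ ≤ (‖M‖ * ‖((WithLp.equiv 2 (n → 𝕜)).symm xv : EuclideanSpace 𝕜 n)‖) ^ 2 := by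
        apply pow_le_pow_left₀ (norm_nonneg _) h
    _ = ‖M‖ ^ 2 * ∑ j, ‖xv j‖ ^ 2 := by rw [mul_pow, e2]

lemma opNorm_le_of_sq_bound (M : Matrix m n 𝕜) (c : ℝ) (hc : 0 ≤ c)
    (h : ∀ xv : n → 𝕜, ∑ i, ‖M.mulVec xv i‖ ^ 2 ≤ c ^ 2 * ∑ j, ‖xv j‖ ^ 2) : ‖M‖ ≤ c := by
  rw [Matrix.l2_opNorm_def]
  apply ContinuousLinearMap.opNorm_le_bound _ hc
  intro xx
  have hx : ‖(Matrix.toEuclideanLin M) xx‖ ^ 2 ≤ (c * ‖xx‖) ^ 2 := by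
    have e1 : ‖(Matrix.toEuclideanLin M) xx‖ ^ 2 = ∑ i, ‖M.mulVec (WithLp.equiv 2 (n → 𝕜) xx) i‖ ^ 2 := by
      rw [EuclideanSpace.norm_eq, Real.sq_sqrt (by positivity)]
      rfl
    have e2 : ‖xx‖ ^ 2 = ∑ j, ‖(WithLp.equiv 2 (n → 𝕜) xx) j‖ ^ 2 := by
      rw [EuclideanSpace.norm_eq, Real.sq_sqrt (by positivity)]
      rfl
    rw [e1, mul_pow, e2]
    exact h _
  have h2 : ‖(Matrix.toEuclideanLin M) xx‖ ≤ c * ‖xx‖ :=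
    (abs_le_of_sq_le_sq' hx (by positivity)).2
  exact h2

lemma shiftMatrix_pow (K : Type*) [Ring K] (m k : ℕ) :
    (shiftMatrix K m) ^ k
      = Matrix.of fun (i j : Fin m) => if (i : ℕ) + k = (j : ℕ) then (1 : K) else 0 := by
  induction k with
  | zero =>
    ext i j
    simp [Matrix.one_apply, Fin.ext_iff]
  | succ k ih =>
    rw [pow_succ, ih]
    ext i j
    rw [Matrix.mul_apply]
    by_cases h : (i : ℕ) + k < m
    · rw [Finset.sum_eq_single (⟨(i : ℕ) + k, h⟩ : Fin m)]
      · have h2 : (((⟨(i : ℕ) + k, h⟩ : Fin m) : ℕ) + 1 = (j : ℕ)) ↔ ((i : ℕ) + (k + 1) = (j : ℕ)) := by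
          simp; omega
        simp only [Matrix.of_apply, shiftMatrix, if_pos rfl, one_mul]
        simp only [Matrix.of_apply, h2]
        simp
      · intro l _ hl
        have hne : ¬ ((i : ℕ) + k = (l : ℕ)) := fun hc => hl (Fin.ext hc.symm)
        rw [Matrix.of_apply, if_neg hne, zero_mul]
      · intro hl; exact absurd (Finset.mem_univ _) hl
    · have hsum : ∀ l : Fin m, (Matrix.of fun (i j : Fin m) =>
          if (i : ℕ) + k = (j : ℕ) then (1 : K) else 0) i l * shiftMatrix K m l j = 0 := by
        intro l
        have hne : ¬ ((i : ℕ) + k = (l : ℕ)) := by have := l.isLt; omega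
        rw [Matrix.of_apply, if_neg hne, zero_mul]
      rw [Finset.sum_eq_zero fun l _ => hsum l, Matrix.of_apply,
        if_neg (show ¬ ((i : ℕ) + (k + 1) = (j : ℕ)) by have := j.isLt; omega)]

lemma shiftMatrix_pow_eq_zero (K : Type*) [Ring K] (m k : ℕ) (h : m ≤ k) :
    (shiftMatrix K m) ^ k = 0 := by
  rw [shiftMatrix_pow]
  ext i j
  rw [Matrix.of_apply, if_neg]
  · rfl
  · have := j.isLt; omega

lemma shiftMatrix_pow_norm_le (m k : ℕ) : ‖(shiftMatrix 𝕜 m) ^ k‖ ≤ 1 := by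
  apply opNorm_le_of_sq_bound _ _ zero_le_one
  intro xv
  set xv' : ℕ → 𝕜 := fun j => if h : j < m then xv ⟨j, h⟩ else 0 with hxv'
  have hmv : ∀ i : Fin m, ((shiftMatrix 𝕜 m) ^ k).mulVec xv i = xv' ((i : ℕ) + k) := by
    intro i
    rw [shiftMatrix_pow, Matrix.mulVec, dotProduct]
    by_cases h : (i : ℕ) + k < m
    · rw [Finset.sum_eq_single (⟨(i : ℕ) + k, h⟩ : Fin m)]
      · simp [xv', h]
      · intro l _ hl
        have hne : ¬ ((i : ℕ) + k = (l : ℕ)) := fun hc => hl (Fin.ext hc.symm)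
        rw [Matrix.of_apply, if_neg hne, zero_mul]
      · intro hl; exact absurd (Finset.mem_univ _) hl
    · have hsum : ∀ l : Fin m, (Matrix.of fun (i j : Fin m) =>
          if (i : ℕ) + k = (j : ℕ) then (1 : 𝕜) else 0) i l * xv l = 0 := by
        intro l
        have hne : ¬ ((i : ℕ) + k = (l : ℕ)) := by have := l.isLt; omega
        rw [Matrix.of_apply, if_neg hne, zero_mul]
      rw [Finset.sum_eq_zero fun l _ => hsum l]
      simp only [xv', dif_neg h]
  have key : ∑ i : Fin m, ‖((shiftMatrix 𝕜 m) ^ k).mulVec xv i‖ ^ 2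
      = ∑ i ∈ Finset.range m, ‖xv' (i + k)‖ ^ 2 := by
    rw [← Fin.sum_univ_eq_sum_range (fun i => ‖xv' (i + k)‖ ^ 2) m]
    exact Finset.sum_congr rfl fun i _ => by rw [hmv]
  rw [key, one_pow, one_mul]
  have hzero : ∀ j, m ≤ j → ‖xv' j‖ ^ 2 = 0 := by
    intro j hj; simp only [xv', dif_neg (by omega : ¬ j < m)]; simp
  have h1 : ∑ i ∈ Finset.range m, ‖xv' (i + k)‖ ^ 2 = ∑ j ∈ Finset.Ico k (m + k), ‖xv' j‖ ^ 2 := by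
    rw [Finset.sum_Ico_eq_sum_range]
    simp only [add_tsub_cancel_right]
    exact Finset.sum_congr rfl fun i _ => by rw [add_comm]
  rw [h1]
  have h2 : ∑ j ∈ Finset.Ico k (m + k), ‖xv' j‖ ^ 2 ≤ ∑ j ∈ Finset.range (m + k), ‖xv' j‖ ^ 2 := by
    apply Finset.sum_le_sum_of_subset_of_nonneg
    · intro a ha; rw [Finset.mem_range]; exact (Finset.mem_Ico.1 ha).2
    · intros; positivity
  have h3 : ∑ j ∈ Finset.range (m + k), ‖xv' j‖ ^ 2 = ∑ j ∈ Finset.range m, ‖xv' j‖ ^ 2 := by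
    rw [← Finset.sum_range_add_sum_Ico _ (Nat.le_add_right m k)]
    rw [Finset.sum_eq_zero fun j hj => hzero j (Finset.mem_Ico.1 hj).1, add_zero]
  have h4 : ∑ j ∈ Finset.range m, ‖xv' j‖ ^ 2 = ∑ l : Fin m, ‖xv l‖ ^ 2 := by
    rw [← Fin.sum_univ_eq_sum_range (fun j => ‖xv' j‖ ^ 2) m]
    exact Finset.sum_congr rfl fun l _ => by simp [xv', l.isLt]
  rw [← h4]; exact h2.trans (le_of_eq h3)

lemma smul_one_pow_norm_le (lam : 𝕜) (hlam : ‖lam‖ ≤ 1) (m p : ℕ) :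
    ‖(lam • (1 : Matrix (Fin m) (Fin m) 𝕜)) ^ p‖ ≤ 1 := by
  rw [smul_pow, one_pow, norm_smul]
  have h1 : ‖(1 : Matrix (Fin m) (Fin m) 𝕜)‖ ≤ 1 := by
    rw [Matrix.cstar_norm_def, _root_.map_one]
    exact ContinuousLinearMap.norm_id_le
  have h2 : ‖lam ^ p‖ ≤ 1 := by
    rw [norm_pow]
    exact pow_le_one₀ (norm_nonneg _) hlam
  calc ‖lam ^ p‖ * ‖(1 : Matrix (Fin m) (Fin m) 𝕜)‖ ≤ 1 * 1 :=
        mul_le_mul h2 h1 (norm_nonneg _) zero_le_one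
    _ = 1 := mul_one 1

lemma jordanBlock_pow_norm_le (lam : 𝕜) (hlam : ‖lam‖ ≤ 1) (m r j : ℕ) (hm : m ≤ r) :
    ‖(jordanBlock 𝕜 lam m) ^ j‖ ≤ ∑ i ∈ Finset.range r, (j.choose i : ℝ) := by
  have hcomm : Commute (shiftMatrix 𝕜 m) (lam • (1 : Matrix (Fin m) (Fin m) 𝕜)) :=
    (Commute.one_right _).smul_right lam
  have hJ : jordanBlock 𝕜 lam m = shiftMatrix 𝕜 m + lam • 1 := add_comm _ _
  rw [hJ, hcomm.add_pow]
  refine le_trans (norm_sum_le _ _) ?_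
  have hterm : ∀ i ∈ Finset.range (j + 1),
      ‖(shiftMatrix 𝕜 m) ^ i * (lam • (1 : Matrix (Fin m) (Fin m) 𝕜)) ^ (j - i) * (j.choose i : Matrix (Fin m) (Fin m) 𝕜)‖
        ≤ if i < m then (j.choose i : ℝ) else 0 := by
    intro i _
    by_cases him : i < m
    · rw [if_pos him]
      have e1 : (shiftMatrix 𝕜 m) ^ i * (lam • (1 : Matrix (Fin m) (Fin m) 𝕜)) ^ (j - i) * (j.choose i : Matrix (Fin m) (Fin m) 𝕜)
          = (j.choose i : ℕ) • ((shiftMatrix 𝕜 m) ^ i * (lam • (1 : Matrix (Fin m) (Fin m) 𝕜)) ^ (j - i)) := by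
        rw [nsmul_eq_mul, ← (Nat.cast_commute (j.choose i) ((shiftMatrix 𝕜 m) ^ i * (lam • (1 : Matrix (Fin m) (Fin m) 𝕜)) ^ (j - i))).eq]
      rw [e1]
      refine le_trans norm_nsmul_le ?_
      calc (j.choose i : ℝ) * ‖(shiftMatrix 𝕜 m) ^ i * (lam • (1 : Matrix (Fin m) (Fin m) 𝕜)) ^ (j - i)‖
          ≤ (j.choose i : ℝ) * (1 * 1) := by
            apply mul_le_mul_of_nonneg_left _ (Nat.cast_nonneg _)
            refine le_trans (Matrix.l2_opNorm_mul _ _) ?_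
            exact mul_le_mul (shiftMatrix_pow_norm_le m i) (smul_one_pow_norm_le lam hlam m (j - i))
              (norm_nonneg _) zero_le_one
        _ = (j.choose i : ℝ) := by ring
    · rw [if_neg him, shiftMatrix_pow_eq_zero 𝕜 m i (by omega), zero_mul, zero_mul, norm_zero]
  refine le_trans (Finset.sum_le_sum hterm) ?_
  rw [Finset.sum_ite, Finset.sum_const, smul_zero, add_zero]
  apply Finset.sum_le_sum_of_subset_of_nonneg
  · intro a ha
    simp only [Finset.mem_filter, Finset.mem_range] at ha ⊢
    omega
  · intros; positivity

lemma blockDiagonal'_mulVec {o : Type*} [Fintype o] [DecidableEq o]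
    {m' : o → Type*} [∀ i, Fintype (m' i)] [∀ i, DecidableEq (m' i)]
    (J : ∀ i, Matrix (m' i) (m' i) 𝕜) (xv : (Σ i, m' i) → 𝕜) (i : o) (j : m' i) :
    (Matrix.blockDiagonal' J).mulVec xv ⟨i, j⟩ = (J i).mulVec (fun k => xv ⟨i, k⟩) j := by
  rw [Matrix.mulVec, dotProduct, ← Finset.univ_sigma_univ, Finset.sum_sigma]
  rw [Finset.sum_eq_single i]
  · rw [Matrix.mulVec, dotProduct]
    exact Finset.sum_congr rfl fun k _ => by rw [Matrix.blockDiagonal'_apply_eq]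
  · intro i' _ hne
    apply Finset.sum_eq_zero
    intro k _
    rw [Matrix.blockDiagonal'_apply_ne _ _ _ (Ne.symm hne), zero_mul]
  · intro hi; exact absurd (Finset.mem_univ _) hi

lemma blockDiagonal'_norm_le {o : Type*} [Fintype o] [DecidableEq o]
    {m' : o → Type*} [∀ i, Fintype (m' i)] [∀ i, DecidableEq (m' i)]
    (J : ∀ i, Matrix (m' i) (m' i) 𝕜) (c : ℝ) (hc : 0 ≤ c) (h : ∀ i, ‖J i‖ ≤ c) :
    ‖Matrix.blockDiagonal' J‖ ≤ c := by
  apply opNorm_le_of_sq_bound _ _ hc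
  intro xv
  rw [← Finset.univ_sigma_univ, Finset.sum_sigma, Finset.sum_sigma]
  have hstep : ∀ i : o, ∑ j : m' i, ‖(Matrix.blockDiagonal' J).mulVec xv ⟨i, j⟩‖ ^ 2
      ≤ c ^ 2 * ∑ k : m' i, ‖xv ⟨i, k⟩‖ ^ 2 := by
    intro i
    have e : ∀ j : m' i, ‖(Matrix.blockDiagonal' J).mulVec xv ⟨i, j⟩‖ ^ 2
        = ‖(J i).mulVec (fun k => xv ⟨i, k⟩) j‖ ^ 2 := fun j => by rw [blockDiagonal'_mulVec]
    rw [Finset.sum_congr rfl fun j _ => e j]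
    refine le_trans (mulVec_sq_le (J i) _) ?_
    apply mul_le_mul_of_nonneg_right _ (by positivity)
    exact pow_le_pow_left₀ (norm_nonneg _) (h i) 2
  refine le_trans (Finset.sum_le_sum fun i _ => hstep i) ?_
  rw [← Finset.mul_sum]

lemma sandwich_pow {N : ℕ} {σ : Type*} [Fintype σ] [DecidableEq σ]
    (S : Matrix (Fin N) σ ℂ) (S' : Matrix σ (Fin N) ℂ) (B : Matrix σ σ ℂ)
    (h1 : S * S' = 1) (h2 : S' * S = 1) (j : ℕ) :
    (S * B * S') ^ j = S * B ^ j * S' := by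
  induction j with
  | zero => rw [pow_zero, pow_zero, Matrix.mul_one, h1]
  | succ j ih =>
    rw [pow_succ, ih, pow_succ]
    calc S * B ^ j * S' * (S * B * S') = S * B ^ j * (S' * S) * B * S' := by
          simp only [Matrix.mul_assoc]
      _ = S * (B ^ j * B) * S' := by rw [h2, Matrix.mul_one]; simp only [Matrix.mul_assoc]

lemma stable_pow {n : ℕ} {κ γ : ℝ} {B : Matrix (Fin n) (Fin n) ℝ}
    (h : StronglyStable n κ γ B) (k : ℕ) (hk : 1 ≤ k) : ‖B ^ k‖ ≤ κ * (1 - γ) ^ k := by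
  obtain ⟨hκ, hγ, hγ1, P, Q, hBPQ, hQn, hPn⟩ := h
  rw [opNorm_eq] at hQn
  rw [opNorm_eq, opNorm_eq] at hPn
  have hγ0 : (0:ℝ) ≤ 1 - γ := by linarith
  by_cases hdet : IsUnit P.det
  · have hpow : ∀ j : ℕ, B ^ j = P * Q ^ j * P⁻¹ := by
      intro j
      induction j with
      | zero => rw [pow_zero, pow_zero, Matrix.mul_one, Matrix.mul_nonsing_inv P hdet]
      | succ j ih =>
        rw [pow_succ, ih, hBPQ, pow_succ]
        calc P * Q ^ j * P⁻¹ * (P * Q * P⁻¹) = P * Q ^ j * (P⁻¹ * (P * (Q * P⁻¹))) := by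
              simp only [Matrix.mul_assoc]
          _ = P * (Q ^ j * Q) * P⁻¹ := by
              rw [Matrix.nonsing_inv_mul_cancel_left _ _ hdet]
              simp only [Matrix.mul_assoc]
    rw [hpow k]
    have hQk : ‖Q ^ k‖ ≤ (1 - γ) ^ k :=
      le_trans (norm_pow_le' Q hk) (pow_le_pow_left₀ (norm_nonneg _) hQn k)
    calc ‖P * Q ^ k * P⁻¹‖ ≤ ‖P * Q ^ k‖ * ‖P⁻¹‖ := Matrix.l2_opNorm_mul _ _
      _ ≤ ‖P‖ * ‖Q ^ k‖ * ‖P⁻¹‖ :=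
          mul_le_mul_of_nonneg_right (Matrix.l2_opNorm_mul _ _) (norm_nonneg _)
      _ = (‖P‖ * ‖P⁻¹‖) * ‖Q ^ k‖ := by ring
      _ ≤ κ * (1 - γ) ^ k :=
          mul_le_mul hPn hQk (norm_nonneg _) (le_of_lt hκ)
  · have hP0 : P⁻¹ = 0 := Matrix.nonsing_inv_apply_not_isUnit P hdet
    have hB0 : B = 0 := by rw [hBPQ, hP0, Matrix.mul_zero]
    rw [hB0, zero_pow (by omega), norm_zero]
    positivity

lemma geom_sum_le_inv {ρ : ℝ} (h0 : 0 ≤ ρ) (h1 : ρ < 1) (N : ℕ) :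
    ∑ i ∈ Finset.range N, ρ ^ i ≤ (1 - ρ)⁻¹ := by
  have hne : ρ ≠ 1 := ne_of_lt h1
  have h2 : (0:ℝ) < 1 - ρ := by linarith
  have key : ∑ i ∈ Finset.range N, ρ ^ i = (1 - ρ ^ N) / (1 - ρ) := by
    rw [geom_sum_eq hne, ← neg_div_neg_eq]
    ring_nf
  rw [key, inv_eq_one_div]
  have hρN : (0:ℝ) ≤ ρ ^ N := by positivity
  apply div_le_div₀ (by norm_num) (by linarith) h2 le_rfl

lemma nat_sum_pow_le (T r : ℕ) : ∑ i ∈ Finset.range r, T ^ (i + 2) ≤ (1 + T) ^ (r + 1) := by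
  induction r with
  | zero => simp
  | succ r ih =>
    rw [Finset.sum_range_succ]
    have h1 : T ^ (r + 2) ≤ T * (1 + T) ^ (r + 1) := by
      calc T ^ (r + 2) = T * T ^ (r + 1) := by ring
        _ ≤ T * (1 + T) ^ (r + 1) :=
          Nat.mul_le_mul_left T (Nat.pow_le_pow_left (by omega) _)
    calc ∑ i ∈ Finset.range r, T ^ (i + 2) + T ^ (r + 2)
        ≤ (1 + T) ^ (r + 1) + T * (1 + T) ^ (r + 1) := Nat.add_le_add ih h1
      _ = (1 + T) ^ (r + 2) := by ring

lemma nat_TB_le (T r : ℕ) :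
    T * (∑ j ∈ Finset.range T, ∑ i ∈ Finset.range r, j.choose i) ≤ (1 + T) ^ (r + 1) := by
  have h1 : ∀ j ∈ Finset.range T, ∑ i ∈ Finset.range r, j.choose i
      ≤ ∑ i ∈ Finset.range r, T ^ i := by
    intro j hj
    apply Finset.sum_le_sum
    intro i _
    exact le_trans (Nat.choose_le_pow j i)
      (Nat.pow_le_pow_left (le_of_lt (Finset.mem_range.1 hj)) i)
  have h2 : ∑ j ∈ Finset.range T, ∑ i ∈ Finset.range r, j.choose i
      ≤ T * ∑ i ∈ Finset.range r, T ^ i := by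
    calc ∑ j ∈ Finset.range T, ∑ i ∈ Finset.range r, j.choose i
        ≤ ∑ _j ∈ Finset.range T, ∑ i ∈ Finset.range r, T ^ i := Finset.sum_le_sum h1
      _ = T * ∑ i ∈ Finset.range r, T ^ i := by
          rw [Finset.sum_const, Finset.card_range, smul_eq_mul]
  calc T * (∑ j ∈ Finset.range T, ∑ i ∈ Finset.range r, j.choose i)
      ≤ T * (T * ∑ i ∈ Finset.range r, T ^ i) := Nat.mul_le_mul_left T h2
    _ = ∑ i ∈ Finset.range r, T ^ (i + 2) := by
        rw [Finset.mul_sum, Finset.mul_sum]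
        exact Finset.sum_congr rfl fun i _ => by ring
    _ ≤ (1 + T) ^ (r + 1) := nat_sum_pow_le T r

lemma rho_pow_le {γ : ℝ} (hγ : 0 < γ) (hγ1 : γ ≤ 1) (r H T : ℕ)
    (hH : γ⁻¹ * ((r : ℝ) + 1) * Real.log (1 + (T : ℝ)) ≤ (H : ℝ)) :
    (1 - γ) ^ H * (1 + (T : ℝ)) ^ (r + 1) ≤ 1 := by
  have hT0 : (0:ℝ) < 1 + (T : ℝ) := by positivity
  have h1 : (1 - γ) ^ H ≤ Real.exp (-γ) ^ H := by
    apply pow_le_pow_left₀ (by linarith)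
    linarith [Real.add_one_le_exp (-γ)]
  have h2 : Real.exp (-γ) ^ H = Real.exp (-(γ * H)) := by
    rw [← Real.exp_nat_mul]
    ring_nf
  have h3 : (1 + (T : ℝ)) ^ (r + 1) = Real.exp (((r : ℝ) + 1) * Real.log (1 + (T : ℝ))) := by
    rw [← Real.rpow_natCast (1 + (T : ℝ)) (r + 1), Real.rpow_def_of_pos hT0]
    congr 1
    push_cast
    ring
  have h4 : ((r : ℝ) + 1) * Real.log (1 + (T : ℝ)) ≤ γ * H := by
    have := mul_le_mul_of_nonneg_left hH (le_of_lt hγ)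
    calc ((r : ℝ) + 1) * Real.log (1 + (T : ℝ))
        = γ * (γ⁻¹ * ((r : ℝ) + 1) * Real.log (1 + (T : ℝ))) := by
          field_simp
      _ ≤ γ * H := this
  calc (1 - γ) ^ H * (1 + (T : ℝ)) ^ (r + 1)
      ≤ Real.exp (-(γ * H)) * Real.exp (((r : ℝ) + 1) * Real.log (1 + (T : ℝ))) := by
        rw [← h2, ← h3]
        apply mul_le_mul_of_nonneg_right h1 (by positivity)
    _ = Real.exp (((r : ℝ) + 1) * Real.log (1 + (T : ℝ)) - γ * H) := by
        rw [← Real.exp_add]; ring_nf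
    _ ≤ 1 := Real.exp_le_one_iff.2 (by linarith)

end Helpers

/-- cumulative Luenberger truncation error.  If
`H ≥ ⌈γ⁻¹(r+1) log(1+T)⌉` then `∑_{t=1}^T ‖ŷ_t^{LB} − ŷ_t^{TR}‖ ≤ C_trun` and
`∑_{t=1}^T ‖ŷ_t^{LB} − ŷ_t^{TR}‖² ≤ C_trun²`, where `C_trun = γ⁻¹‖C‖κ²C_y` and
`C_y = ‖C‖κ_A C_w + C_v`. -/
theorem luenberger_truncation_error_cumulative
    (n p r H T : ℕ)
    (A : Matrix (Fin n) (Fin n) ℝ) (C : Matrix (Fin p) (Fin n) ℝ)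
    (κA κ γ Cw Cv : ℝ)
    (hJordan : HasJordanForm n r A κA)
    (x w : ℤ → Matrix (Fin n) (Fin 1) ℝ) (y v : ℤ → Matrix (Fin p) (Fin 1) ℝ)
    (hx0 : ∀ s : ℤ, s ≤ 0 → x s = 0)
    (hw0 : ∀ s : ℤ, s < 0 → w s = 0)
    (hv0 : ∀ s : ℤ, s ≤ 0 → v s = 0)
    (hdyn : ∀ t : ℤ, x (t + 1) = A * x t + w t)
    (hout : ∀ t : ℤ, y t = C * x t + v t)
    (hw : ∀ t, opNorm (w t) ≤ Cw)
    (hv : ∀ t, opNorm (v t) ≤ Cv)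
    (L : Matrix (Fin n) (Fin p) ℝ)
    (hL : opNorm L ≤ κ)
    (hstab : StronglyStable n κ γ (A - L * C))
    (xhat : ℤ → Matrix (Fin n) (Fin 1) ℝ)
    (hxhat0 : ∀ s : ℤ, s ≤ 0 → xhat s = 0)
    (hxhat : ∀ t : ℤ, xhat (t + 1) = (A - L * C) * xhat t + L * y t)
    (hH : ⌈γ⁻¹ * ((r : ℝ) + 1) * Real.log (1 + (T : ℝ))⌉ ≤ (H : ℤ)) :
    (∑ t ∈ Finset.Icc (1 : ℤ) (T : ℤ),
        opNorm (C * xhat t -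
          ∑ k ∈ Finset.range H, C * (A - L * C) ^ k * L * y (t - (k : ℤ) - 1))
      ≤ γ⁻¹ * opNorm C * κ ^ 2 * (opNorm C * (κA * Cw) + Cv)) ∧
    (∑ t ∈ Finset.Icc (1 : ℤ) (T : ℤ),
        (opNorm (C * xhat t -
          ∑ k ∈ Finset.range H, C * (A - L * C) ^ k * L * y (t - (k : ℤ) - 1))) ^ 2
      ≤ (γ⁻¹ * opNorm C * κ ^ 2 * (opNorm C * (κA * Cw) + Cv)) ^ 2) := by
  classical
  obtain ⟨b, msize, lam, S, S', hms, hlam, hSS', hS'S, hA, hκA⟩ := hJordan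
  have hκ : 0 < κ := hstab.1
  have hγ : 0 < γ := hstab.2.1
  have hγ1 : γ ≤ 1 := hstab.2.2.1
  simp only [opNorm_eq] at hw hv hL hκA ⊢
  set AL := A - L * C with hALdef
  -- basic nonnegativity
  have hCw0 : 0 ≤ Cw := le_trans (norm_nonneg _) (hw 0)
  have hCv0 : 0 ≤ Cv := le_trans (norm_nonneg _) (hv 0)
  have hκA0 : 0 ≤ κA := by rw [hκA]; exact mul_nonneg (norm_nonneg _) (norm_nonneg _)
  have hC0 : (0:ℝ) ≤ ‖C‖ := norm_nonneg _
  have hκ0 : (0:ℝ) ≤ κ := le_of_lt hκ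
  -- abbreviations
  set bJ : ℕ → ℝ := fun j => ∑ i ∈ Finset.range r, (j.choose i : ℝ) with hbJ
  have hbJ0 : ∀ j, 0 ≤ bJ j := fun j => Finset.sum_nonneg fun i _ => Nat.cast_nonneg _
  set BB : ℝ := ∑ j ∈ Finset.range T, bJ j with hBB
  have hBB0 : 0 ≤ BB := Finset.sum_nonneg fun j _ => hbJ0 j
  set Ymax : ℝ := ‖C‖ * (κA * Cw) * BB + Cv with hYmax
  have hYmax0 : 0 ≤ Ymax := by positivity
  set Cy : ℝ := ‖C‖ * (κA * Cw) + Cv with hCy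
  have hCy0 : 0 ≤ Cy := by positivity
  -- vanishing outputs
  have hy0 : ∀ s : ℤ, s ≤ 0 → y s = 0 := by
    intro s hs
    rw [hout s, hx0 s hs, hv0 s hs, Matrix.mul_zero, add_zero]
  -- closed forms
  have hxform : ∀ N : ℕ, x (N : ℤ) = ∑ j ∈ Finset.range N, A ^ j * w ((N : ℤ) - 1 - (j : ℤ)) := by
    intro N
    induction N with
    | zero => rw [Finset.range_zero, Finset.sum_empty]; exact hx0 0 le_rfl
    | succ N ih =>
      have hstep : x ((N : ℤ) + 1) = A * x (N : ℤ) + w (N : ℤ) := hdyn (N : ℤ)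
      have hcast : ((N + 1 : ℕ) : ℤ) = (N : ℤ) + 1 := by push_cast; ring
      rw [hcast, hstep, ih, Matrix.mul_sum]
      rw [Finset.sum_range_succ']
      have hterm : ∀ j ∈ Finset.range N,
          A * (A ^ j * w ((N : ℤ) - 1 - (j : ℤ)))
            = A ^ (j + 1) * w ((N : ℤ) + 1 - 1 - ((j + 1 : ℕ) : ℤ)) := by
        intro j _
        have harg : (N : ℤ) - 1 - (j : ℤ) = (N : ℤ) + 1 - 1 - ((j + 1 : ℕ) : ℤ) := by
          push_cast; ring
        rw [← harg, ← Matrix.mul_assoc, ← pow_succ']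
      rw [Finset.sum_congr rfl hterm]
      congr 1
      rw [pow_zero, Matrix.one_mul]
      congr 1
      push_cast; ring
  have hxhform : ∀ N : ℕ,
      xhat (N : ℤ) = ∑ j ∈ Finset.range N, AL ^ j * (L * y ((N : ℤ) - 1 - (j : ℤ))) := by
    intro N
    induction N with
    | zero => rw [Finset.range_zero, Finset.sum_empty]; exact hxhat0 0 le_rfl
    | succ N ih =>
      have hstep : xhat ((N : ℤ) + 1) = AL * xhat (N : ℤ) + L * y (N : ℤ) := hxhat (N : ℤ)
      have hcast : ((N + 1 : ℕ) : ℤ) = (N : ℤ) + 1 := by push_cast; ring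
      rw [hcast, hstep, ih, Matrix.mul_sum]
      rw [Finset.sum_range_succ']
      have hterm : ∀ j ∈ Finset.range N,
          AL * (AL ^ j * (L * y ((N : ℤ) - 1 - (j : ℤ))))
            = AL ^ (j + 1) * (L * y ((N : ℤ) + 1 - 1 - ((j + 1 : ℕ) : ℤ))) := by
        intro j _
        have harg : (N : ℤ) - 1 - (j : ℤ) = (N : ℤ) + 1 - 1 - ((j + 1 : ℕ) : ℤ) := by
          push_cast; ring
        rw [← harg, ← Matrix.mul_assoc, ← pow_succ']
      rw [Finset.sum_congr rfl hterm]
      congr 1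
      rw [pow_zero, Matrix.one_mul]
      congr 1
      push_cast; ring
  -- powers of A acting on vectors
  have hApow : ∀ (j : ℕ) (u : Matrix (Fin n) (Fin 1) ℝ), ‖A ^ j * u‖ ≤ κA * bJ j * ‖u‖ := by
    intro j u
    have e0 : ‖A ^ j * u‖ = ‖(A ^ j * u).map Complex.ofReal‖ := (vecnorm_map_ofReal _).symm
    have e1 : (A ^ j * u).map Complex.ofReal
        = (A.map Complex.ofReal) ^ j * (u.map Complex.ofReal) := by
      rw [show (Complex.ofReal : ℝ → ℂ) = ⇑Complex.ofRealHom from rfl]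
      rw [Matrix.map_mul (f := Complex.ofRealHom)]
      congr 1
      exact RingHom.map_pow (Complex.ofRealHom.mapMatrix) A j
    set Jb : Matrix ((i : Fin b) × Fin (msize i)) ((i : Fin b) × Fin (msize i)) ℂ :=
      Matrix.blockDiagonal' (fun i => jordanBlock ℂ (lam i) (msize i)) with hJb
    have e2 : (A.map Complex.ofReal) ^ j = S * Jb ^ j * S' := by
      rw [hA]
      exact sandwich_pow S S' Jb hSS' hS'S j
    have hJbj : ‖Jb ^ j‖ ≤ bJ j := by
      rw [hJb, ← Matrix.blockDiagonal'_pow]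
      apply blockDiagonal'_norm_le _ _ (hbJ0 j)
      intro i
      exact jordanBlock_pow_norm_le (lam i) (hlam i)
        (msize i) r j (hms i)
    have hbound : ‖S * Jb ^ j * S' * (u.map Complex.ofReal)‖
        ≤ κA * bJ j * ‖u.map Complex.ofReal‖ := by
      calc ‖S * Jb ^ j * S' * (u.map Complex.ofReal)‖
          ≤ ‖S * Jb ^ j * S'‖ * ‖u.map Complex.ofReal‖ := Matrix.l2_opNorm_mul _ _
        _ ≤ (‖S * Jb ^ j‖ * ‖S'‖) * ‖u.map Complex.ofReal‖ :=
            mul_le_mul_of_nonneg_right (Matrix.l2_opNorm_mul _ _) (norm_nonneg _)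
        _ ≤ ((‖S‖ * ‖Jb ^ j‖) * ‖S'‖) * ‖u.map Complex.ofReal‖ := by
            apply mul_le_mul_of_nonneg_right _ (norm_nonneg _)
            exact mul_le_mul_of_nonneg_right (Matrix.l2_opNorm_mul _ _) (norm_nonneg _)
        _ ≤ ((‖S‖ * bJ j) * ‖S'‖) * ‖u.map Complex.ofReal‖ := by
            apply mul_le_mul_of_nonneg_right _ (norm_nonneg _)
            apply mul_le_mul_of_nonneg_right _ (norm_nonneg _)
            exact mul_le_mul_of_nonneg_left hJbj (norm_nonneg _)
        _ = κA * bJ j * ‖u.map Complex.ofReal‖ := by rw [hκA]; ring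
    rw [e0, e1, e2]
    calc ‖S * Jb ^ j * S' * (u.map Complex.ofReal)‖ ≤ κA * bJ j * ‖u.map Complex.ofReal‖ :=
          hbound
      _ = κA * bJ j * ‖u‖ := by rw [vecnorm_map_ofReal]
  -- state bound
  have hxb : ∀ s : ℤ, s ≤ (T : ℤ) → ‖x s‖ ≤ κA * Cw * BB := by
    intro s hs
    by_cases hs0 : s ≤ 0
    · rw [hx0 s hs0, norm_zero]; positivity
    · push_neg at hs0
      set N := s.toNat with hN
      have hsN : (N : ℤ) = s := Int.toNat_of_nonneg (by omega)
      have hNT : N ≤ T := by omega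
      rw [← hsN, hxform N]
      refine le_trans (norm_sum_le _ _) ?_
      have hterm : ∀ j ∈ Finset.range N,
          ‖A ^ j * w ((N : ℤ) - 1 - (j : ℤ))‖ ≤ κA * Cw * bJ j := by
        intro j _
        calc ‖A ^ j * w ((N : ℤ) - 1 - (j : ℤ))‖ ≤ κA * bJ j * ‖w ((N : ℤ) - 1 - (j : ℤ))‖ :=
              hApow j _
          _ ≤ κA * bJ j * Cw := by
              apply mul_le_mul_of_nonneg_left (hw _)
              positivity
          _ = κA * Cw * bJ j := by ring
      refine le_trans (Finset.sum_le_sum hterm) ?_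
      have hsub : ∑ j ∈ Finset.range N, κA * Cw * bJ j ≤ ∑ j ∈ Finset.range T, κA * Cw * bJ j := by
        apply Finset.sum_le_sum_of_subset_of_nonneg
        · exact Finset.range_subset_range.2 hNT
        · intro j _ _; positivity
      refine le_trans hsub ?_
      rw [hBB, Finset.mul_sum]
  -- output bound
  have hyb : ∀ s : ℤ, s ≤ (T : ℤ) → ‖y s‖ ≤ Ymax := by
    intro s hs
    by_cases hs0 : s ≤ 0
    · rw [hy0 s hs0, norm_zero]; exact hYmax0
    · rw [hout s]
      calc ‖C * x s + v s‖ ≤ ‖C * x s‖ + ‖v s‖ := norm_add_le _ _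
        _ ≤ ‖C‖ * ‖x s‖ + Cv := add_le_add (Matrix.l2_opNorm_mul _ _) (hv s)
        _ ≤ ‖C‖ * (κA * Cw * BB) + Cv := by
            have := mul_le_mul_of_nonneg_left (hxb s hs) hC0
            linarith
        _ = Ymax := by rw [hYmax]; ring
  -- strongly stable powers
  have hALpow : ∀ k : ℕ, 1 ≤ k → ‖AL ^ k‖ ≤ κ * (1 - γ) ^ k := fun k hk => stable_pow hstab k hk
  -- the per-time-step bound
  have hρ0 : (0:ℝ) ≤ 1 - γ := by linarith
  have hρ1 : 1 - γ < 1 := by linarith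
  have key : ∀ t ∈ Finset.Icc (1 : ℤ) (T : ℤ),
      ‖C * xhat t - ∑ k ∈ Finset.range H, C * AL ^ k * L * y (t - (k : ℤ) - 1)‖
        ≤ (‖C‖ * κ * κ * Ymax) * ((1 - γ) ^ H * γ⁻¹) := by
    intro t ht
    rw [Finset.mem_Icc] at ht
    obtain ⟨ht1, htT⟩ := ht
    have hT1 : 1 ≤ T := by omega
    have hH1 : 1 ≤ H := by
      have hlog : 0 < Real.log (1 + (T : ℝ)) := by
        apply Real.log_pos
        have : (1:ℝ) ≤ (T:ℝ) := by exact_mod_cast hT1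
        linarith
      have hpos : 0 < γ⁻¹ * ((r : ℝ) + 1) * Real.log (1 + (T : ℝ)) := by
        apply mul_pos
        apply mul_pos (by positivity)
        positivity
        exact hlog
      have := Int.ceil_pos.2 hpos
      omega
    set N := t.toNat with hNdef
    have htN : (N : ℤ) = t := Int.toNat_of_nonneg (by omega)
    set M := max H N with hM
    -- extend the closed form for xhat to range M
    have hxhatM : xhat t = ∑ j ∈ Finset.range M, AL ^ j * (L * y (t - 1 - (j : ℤ))) := by
      rw [← htN, hxhform N]
      apply Finset.sum_subset (Finset.range_subset_range.2 (le_max_right H N))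
      intro j hjM hjN
      rw [Finset.mem_range] at hjM hjN
      push_neg at hjN
      have : y ((N : ℤ) - 1 - (j : ℤ)) = 0 := by
        apply hy0
        have : (N : ℤ) ≤ (j : ℤ) := by exact_mod_cast hjN
        omega
      rw [this, Matrix.mul_zero, Matrix.mul_zero]
    have hCxhat : C * xhat t = ∑ k ∈ Finset.range M, C * AL ^ k * L * y (t - (k : ℤ) - 1) := by
      rw [hxhatM, Matrix.mul_sum]
      apply Finset.sum_congr rfl
      intro k _
      rw [show t - 1 - (k : ℤ) = t - (k : ℤ) - 1 from by ring]
      simp only [← Matrix.mul_assoc]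
    have hsplit : C * xhat t - ∑ k ∈ Finset.range H, C * AL ^ k * L * y (t - (k : ℤ) - 1)
        = ∑ k ∈ Finset.Ico H M, C * AL ^ k * L * y (t - (k : ℤ) - 1) := by
      rw [hCxhat, Finset.sum_Ico_eq_sub _ (le_max_left H N)]
    rw [hsplit]
    refine le_trans (norm_sum_le _ _) ?_
    have hterm : ∀ k ∈ Finset.Ico H M,
        ‖C * AL ^ k * L * y (t - (k : ℤ) - 1)‖ ≤ (‖C‖ * κ * κ * Ymax) * (1 - γ) ^ k := by
      intro k hk
      rw [Finset.mem_Ico] at hk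
      have hk1 : 1 ≤ k := le_trans hH1 hk.1
      have hys : ‖y (t - (k : ℤ) - 1)‖ ≤ Ymax := hyb _ (by omega)
      have hfac : ‖C * AL ^ k * L‖ ≤ ‖C‖ * (κ * (1 - γ) ^ k) * κ := by
        calc ‖C * AL ^ k * L‖ ≤ ‖C * AL ^ k‖ * ‖L‖ := Matrix.l2_opNorm_mul _ _
          _ ≤ (‖C‖ * ‖AL ^ k‖) * ‖L‖ :=
              mul_le_mul_of_nonneg_right (Matrix.l2_opNorm_mul _ _) (norm_nonneg _)
          _ ≤ (‖C‖ * (κ * (1 - γ) ^ k)) * κ := by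
              apply mul_le_mul _ hL (norm_nonneg _) (by positivity)
              exact mul_le_mul_of_nonneg_left (hALpow k hk1) hC0
      calc ‖C * AL ^ k * L * y (t - (k : ℤ) - 1)‖
          ≤ ‖C * AL ^ k * L‖ * ‖y (t - (k : ℤ) - 1)‖ := Matrix.l2_opNorm_mul _ _
        _ ≤ (‖C‖ * (κ * (1 - γ) ^ k) * κ) * Ymax :=
            mul_le_mul hfac hys (norm_nonneg _) (by positivity)
        _ = (‖C‖ * κ * κ * Ymax) * (1 - γ) ^ k := by ring
    refine le_trans (Finset.sum_le_sum hterm) ?_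
    rw [← Finset.mul_sum]
    apply mul_le_mul_of_nonneg_left _ (by positivity)
    -- geometric sum bound
    calc ∑ k ∈ Finset.Ico H M, (1 - γ) ^ k
        = ∑ i ∈ Finset.range (M - H), (1 - γ) ^ (H + i) := Finset.sum_Ico_eq_sum_range _ _ _
      _ = (1 - γ) ^ H * ∑ i ∈ Finset.range (M - H), (1 - γ) ^ i := by
          rw [Finset.mul_sum]
          exact Finset.sum_congr rfl fun i _ => by rw [pow_add]
      _ ≤ (1 - γ) ^ H * (1 - (1 - γ))⁻¹ := by
          apply mul_le_mul_of_nonneg_left (geom_sum_le_inv hρ0 hρ1 _) (by positivity)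
      _ = (1 - γ) ^ H * γ⁻¹ := by rw [sub_sub_cancel]
  -- sum the per-step bounds
  have hcard : (Finset.Icc (1 : ℤ) (T : ℤ)).card = T := by
    rw [Int.card_Icc]
    omega
  have hsum1 : ∑ t ∈ Finset.Icc (1 : ℤ) (T : ℤ),
      ‖C * xhat t - ∑ k ∈ Finset.range H, C * AL ^ k * L * y (t - (k : ℤ) - 1)‖
        ≤ (T : ℝ) * ((‖C‖ * κ * κ * Ymax) * ((1 - γ) ^ H * γ⁻¹)) := by
    refine le_trans (Finset.sum_le_card_nsmul _ _ _ key) ?_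
    rw [hcard, nsmul_eq_mul]
  -- final arithmetic
  have hTBB : (T : ℝ) * BB ≤ (1 + (T : ℝ)) ^ (r + 1) := by
    have hnat := nat_TB_le T r
    have : ((T * (∑ j ∈ Finset.range T, ∑ i ∈ Finset.range r, j.choose i) : ℕ) : ℝ)
        ≤ (((1 + T) ^ (r + 1) : ℕ) : ℝ) := by exact_mod_cast hnat
    calc (T : ℝ) * BB
        = ((T * (∑ j ∈ Finset.range T, ∑ i ∈ Finset.range r, j.choose i) : ℕ) : ℝ) := by
          rw [hBB, hbJ]
          push_cast
          ring
      _ ≤ (((1 + T) ^ (r + 1) : ℕ) : ℝ) := this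
      _ = (1 + (T : ℝ)) ^ (r + 1) := by push_cast; ring
  have hTle : (T : ℝ) ≤ (1 + (T : ℝ)) ^ (r + 1) := by
    have h1 : (T : ℝ) ≤ 1 + (T : ℝ) := by linarith
    have h0 : (0:ℝ) ≤ (T : ℝ) := Nat.cast_nonneg T
    have h2 : (1 + (T : ℝ)) ≤ (1 + (T : ℝ)) ^ (r + 1) := by
      apply le_self_pow₀ (by linarith) (by omega)
    linarith
  have hTY : (T : ℝ) * Ymax ≤ (1 + (T : ℝ)) ^ (r + 1) * Cy := by
    rw [hYmax, hCy]
    have ha : (0:ℝ) ≤ ‖C‖ * (κA * Cw) := by positivity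
    have h1 := mul_le_mul_of_nonneg_left hTBB ha
    have h2 := mul_le_mul_of_nonneg_left hTle hCv0
    nlinarith
  have hρH := rho_pow_le hγ hγ1 r H T (le_trans (Int.le_ceil _) (by exact_mod_cast hH))
  have hTYρ : (T : ℝ) * Ymax * (1 - γ) ^ H ≤ Cy := by
    calc (T : ℝ) * Ymax * (1 - γ) ^ H
        ≤ ((1 + (T : ℝ)) ^ (r + 1) * Cy) * (1 - γ) ^ H :=
          mul_le_mul_of_nonneg_right hTY (by positivity)
      _ = Cy * ((1 - γ) ^ H * (1 + (T : ℝ)) ^ (r + 1)) := by ring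
      _ ≤ Cy * 1 := mul_le_mul_of_nonneg_left hρH hCy0
      _ = Cy := mul_one Cy
  have hmain : ∑ t ∈ Finset.Icc (1 : ℤ) (T : ℤ),
      ‖C * xhat t - ∑ k ∈ Finset.range H, C * AL ^ k * L * y (t - (k : ℤ) - 1)‖
        ≤ γ⁻¹ * ‖C‖ * κ ^ 2 * Cy := by
    refine le_trans hsum1 ?_
    have e : (T : ℝ) * ((‖C‖ * κ * κ * Ymax) * ((1 - γ) ^ H * γ⁻¹))
        = (γ⁻¹ * ‖C‖ * κ ^ 2) * ((T : ℝ) * Ymax * (1 - γ) ^ H) := by ring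
    rw [e]
    have hc0 : (0:ℝ) ≤ γ⁻¹ * ‖C‖ * κ ^ 2 := by positivity
    calc (γ⁻¹ * ‖C‖ * κ ^ 2) * ((T : ℝ) * Ymax * (1 - γ) ^ H)
        ≤ (γ⁻¹ * ‖C‖ * κ ^ 2) * Cy := mul_le_mul_of_nonneg_left hTYρ hc0
      _ = γ⁻¹ * ‖C‖ * κ ^ 2 * Cy := rfl
  constructor
  · exact hmain
  · have hsq : ∑ t ∈ Finset.Icc (1 : ℤ) (T : ℤ),
        ‖C * xhat t - ∑ k ∈ Finset.range H, C * AL ^ k * L * y (t - (k : ℤ) - 1)‖ ^ 2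
          ≤ (∑ t ∈ Finset.Icc (1 : ℤ) (T : ℤ),
            ‖C * xhat t - ∑ k ∈ Finset.range H, C * AL ^ k * L * y (t - (k : ℤ) - 1)‖) ^ 2 :=
      Finset.sum_sq_le_sq_sum_of_nonneg fun t _ => norm_nonneg _
    refine le_trans hsq ?_
    apply pow_le_pow_left₀ (Finset.sum_nonneg fun t _ => norm_nonneg _) hmain
end

section
/- Consider the system x_{t+1} = A x_t + w_t, y_t = C x_t + v_t with x_0 = 0 and the conventions y_s = 0 for s ≤ 0, w_s = 0 for s < 0, v_s = 0 for s ≤ 0. Let c_0 = 1 and c_1, …, c_m ∈ ℝ, let q(z) := ∑_{i=0}^m c_i z^{m-i}, and define the hint ỹ_t := −∑_{i=1}^m c_i y_{t-i}, so that the residual is Δ_t := y_t − ỹ_t = ∑_{i=0}^m c_i y_{t-i}. Then for all t ≥ 1, Δ_t = ∑_{i=0}^m c_i v_{t-i} + C ∑_{s=0}^{m-1} (∑_{i=0}^{s} c_i A^{s-i}) w_{t-1-s} + C ∑_{s=0}^{t-m-1} q(A) A^{s} w_{t-m-1-s}. -/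
/-- exact residual decomposition for polynomial-filter hints.
With `c_0 = 1`, hint `ỹ_t = −∑_{i=1}^m c_i y_{t-i}`, and residual
`Δ_t = ∑_{i=0}^m c_i y_{t-i}`, for all `t ≥ 1`,
`Δ_t = ∑_{i=0}^m c_i v_{t-i} + C ∑_{s=0}^{m-1} (∑_{i=0}^s c_i A^{s-i}) w_{t-1-s}
     + C ∑_{s=0}^{t-m-1} q(A) A^s w_{t-m-1-s}`, where `q(A) = ∑_{i=0}^m c_i A^{m-i}`.
Sequences are indexed by `ℤ` with the conventions `x_s = 0` for `s ≤ 0`,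
`w_s = 0` for `s < 0` and `v_s = 0` (hence `y_s = 0`) for `s ≤ 0`. -/
theorem polynomial_filter_residual_decomposition
    (n p m : ℕ)
    (A : Matrix (Fin n) (Fin n) ℝ) (C : Matrix (Fin p) (Fin n) ℝ)
    (x w : ℤ → Matrix (Fin n) (Fin 1) ℝ) (y v : ℤ → Matrix (Fin p) (Fin 1) ℝ)
    (hx0 : ∀ s : ℤ, s ≤ 0 → x s = 0)
    (hw0 : ∀ s : ℤ, s < 0 → w s = 0)
    (hv0 : ∀ s : ℤ, s ≤ 0 → v s = 0)
    (hdyn : ∀ t : ℤ, x (t + 1) = A * x t + w t)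
    (hout : ∀ t : ℤ, y t = C * x t + v t)
    (c : ℕ → ℝ) (hc0 : c 0 = 1)
    (t : ℕ) (ht : 1 ≤ t) :
    ∑ i ∈ Finset.range (m + 1), c i • y ((t : ℤ) - (i : ℤ))
      = ∑ i ∈ Finset.range (m + 1), c i • v ((t : ℤ) - (i : ℤ))
        + C * (∑ s ∈ Finset.range m,
            (∑ i ∈ Finset.range (s + 1), c i • A ^ (s - i)) * w ((t : ℤ) - 1 - (s : ℤ)))
        + C * (∑ s ∈ Finset.range (t - m),
            (∑ i ∈ Finset.range (m + 1), c i • A ^ (m - i)) * A ^ s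
              * w ((t : ℤ) - (m : ℤ) - 1 - (s : ℤ))) := by
  classical
  -- closed form for the state
  have hxf : ∀ k : ℕ, ∀ τ : ℤ, τ ≤ (k : ℤ) →
      x τ = ∑ s ∈ Finset.range k, A ^ s * w (τ - 1 - (s : ℤ)) := by
    intro k
    induction k with
    | zero =>
        intro τ hτ
        simpa using hx0 τ (by exact_mod_cast hτ)
    | succ k ih =>
        intro τ hτ
        rcases le_or_gt τ (k : ℤ) with h | h
        · rw [Finset.sum_range_succ, ih τ h, hw0 (τ - 1 - (k : ℤ)) (by omega), Matrix.mul_zero,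
            add_zero]
        · have hτk : τ = (k : ℤ) + 1 := by push_cast at hτ; omega
          subst hτk
          rw [hdyn (k : ℤ), ih (k : ℤ) le_rfl, Matrix.mul_sum, Finset.sum_range_succ']
          congr 1
          · refine Finset.sum_congr rfl fun s _ => ?_
            rw [← Matrix.mul_assoc, ← pow_succ']
            congr 2
            push_cast; ring
          · simp
  -- each term of the filtered state sum, as a sum over a common index set
  have hxi : ∀ i : ℕ, i ≤ m → c i • x ((t : ℤ) - i)
      = ∑ u ∈ Finset.range (m + t),
          (if i ≤ u then c i • (A ^ (u - i) * w ((t : ℤ) - 1 - (u : ℤ))) else 0) := by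
    intro i hi
    calc c i • x ((t : ℤ) - i)
        = ∑ s ∈ Finset.range t, c i • (A ^ s * w ((t : ℤ) - i - 1 - (s : ℤ))) := by
          rw [hxf t _ (by omega), Finset.smul_sum]
      _ = ∑ s ∈ Finset.range (m + t - i), c i • (A ^ s * w ((t : ℤ) - i - 1 - (s : ℤ))) := by
          refine Finset.sum_subset (Finset.range_subset_range.mpr (by omega)) fun s _ hs => ?_
          simp only [Finset.mem_range, not_lt] at hs
          rw [hw0 _ (by omega), Matrix.mul_zero, smul_zero]
      _ = ∑ u ∈ Finset.Ico i (m + t), c i • (A ^ (u - i) * w ((t : ℤ) - 1 - (u : ℤ))) := by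
          rw [Finset.sum_Ico_eq_sum_range]
          refine Finset.sum_congr rfl fun s _ => ?_
          congr 1
          congr 1
          · congr 1; omega
          · congr 1; push_cast; ring
      _ = ∑ u ∈ Finset.range (m + t),
            (if i ≤ u then c i • (A ^ (u - i) * w ((t : ℤ) - 1 - (u : ℤ))) else 0) := by
          rw [← Finset.sum_filter]
          congr 1
          ext u
          simp only [Finset.mem_Ico, Finset.mem_filter, Finset.mem_range]
          omega
  -- key identity for the filtered state
  have key : ∑ i ∈ Finset.range (m + 1), c i • x ((t : ℤ) - i)
      = (∑ s ∈ Finset.range m,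
            (∑ i ∈ Finset.range (s + 1), c i • A ^ (s - i)) * w ((t : ℤ) - 1 - (s : ℤ)))
        + (∑ s ∈ Finset.range (t - m),
            (∑ i ∈ Finset.range (m + 1), c i • A ^ (m - i)) * A ^ s
              * w ((t : ℤ) - (m : ℤ) - 1 - (s : ℤ))) := by
    have hswap : ∑ i ∈ Finset.range (m + 1), c i • x ((t : ℤ) - i)
        = ∑ u ∈ Finset.range (m + t), ∑ i ∈ Finset.range (m + 1),
            (if i ≤ u then c i • (A ^ (u - i) * w ((t : ℤ) - 1 - (u : ℤ))) else 0) := by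
      rw [Finset.sum_comm]
      refine Finset.sum_congr rfl fun i hi => ?_
      exact hxi i (by simp only [Finset.mem_range] at hi; omega)
    rw [hswap, Finset.sum_range_add]
    congr 1
    · refine Finset.sum_congr rfl fun u hu => ?_
      have hu' : u < m := Finset.mem_range.mp hu
      rw [← Finset.sum_filter, Matrix.sum_mul]
      refine Finset.sum_congr ?_ fun i _ => (Matrix.smul_mul _ _ _).symm
      ext i
      simp only [Finset.mem_filter, Finset.mem_range]
      omega
    · have hrw : ∀ s : ℕ,
          (∑ i ∈ Finset.range (m + 1),
              (if i ≤ m + s then c i • (A ^ (m + s - i) * w ((t : ℤ) - 1 - ((m + s : ℕ) : ℤ)))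
                else 0))
          = (∑ i ∈ Finset.range (m + 1), c i • A ^ (m - i)) * A ^ s
              * w ((t : ℤ) - (m : ℤ) - 1 - (s : ℤ)) := by
        intro s
        rw [Matrix.sum_mul, Matrix.sum_mul]
        refine Finset.sum_congr rfl fun i hi => ?_
        have hi' : i ≤ m := by simp only [Finset.mem_range] at hi; omega
        rw [if_pos (by omega), Matrix.smul_mul, Matrix.smul_mul]
        congr 1
        rw [← pow_add]
        congr 1
        · congr 1; omega
        · congr 1; push_cast; ring
      calc ∑ s ∈ Finset.range t, ∑ i ∈ Finset.range (m + 1),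
              (if i ≤ m + s then c i • (A ^ (m + s - i) * w ((t : ℤ) - 1 - ((m + s : ℕ) : ℤ)))
                else 0)
          = ∑ s ∈ Finset.range t,
              (∑ i ∈ Finset.range (m + 1), c i • A ^ (m - i)) * A ^ s
                * w ((t : ℤ) - (m : ℤ) - 1 - (s : ℤ)) := by
            exact Finset.sum_congr rfl fun s _ => hrw s
        _ = ∑ s ∈ Finset.range (t - m),
              (∑ i ∈ Finset.range (m + 1), c i • A ^ (m - i)) * A ^ s
                * w ((t : ℤ) - (m : ℤ) - 1 - (s : ℤ)) := by
            refine (Finset.sum_subset (Finset.range_subset_range.mpr (by omega)) fun s _ hs => ?_).symm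
            simp only [Finset.mem_range, not_lt] at hs
            rw [hw0 _ (by omega), Matrix.mul_zero]
  -- assemble
  calc ∑ i ∈ Finset.range (m + 1), c i • y ((t : ℤ) - (i : ℤ))
      = ∑ i ∈ Finset.range (m + 1), c i • v ((t : ℤ) - (i : ℤ))
        + C * ∑ i ∈ Finset.range (m + 1), c i • x ((t : ℤ) - (i : ℤ)) := by
        rw [Matrix.mul_sum]
        simp only [hout, smul_add, Matrix.mul_smul]
        rw [Finset.sum_add_distrib, add_comm]
    _ = _ := by rw [key, Matrix.mul_add, add_assoc]
end

section
/- Let A ∈ ℝ^{n×n} be diagonalizable with all eigenvalues real and contained in [−1, 1], i.e., A = S D S⁻¹ with D diagonal and real entries in [−1, 1], and set κ_A := ‖S‖ ‖S⁻¹‖. Then ∑_{s=0}^∞ ‖(A² − I) A^s‖ ≤ 2 n κ_A, where ‖·‖ is the operator norm. -/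
open scoped Matrix.Norms.L2Operator

lemma opNorm_eq_norm {m n : Type*} [Fintype m] [Fintype n] [DecidableEq n]
    (A : Matrix m n ℝ) : opNorm A = ‖A‖ := rfl

lemma opNorm_nonneg' {m n : Type*} [Fintype m] [Fintype n] [DecidableEq n]
    (A : Matrix m n ℝ) : 0 ≤ opNorm A := norm_nonneg _

lemma opNorm_mul_le' {n : Type*} [Fintype n] [DecidableEq n]
    (A B : Matrix n n ℝ) : opNorm (A * B) ≤ opNorm A * opNorm B :=
  Matrix.l2_opNorm_mul A B

lemma opNorm_diagonal_le {n : Type*} [Fintype n] [DecidableEq n]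
    (v : n → ℝ) (C : ℝ) (hC : 0 ≤ C) (h : ∀ i, |v i| ≤ C) :
    opNorm (Matrix.diagonal v) ≤ C := by
  apply ContinuousLinearMap.opNorm_le_bound _ hC
  intro x
  have hx : (LinearMap.toContinuousLinearMap (Matrix.toEuclideanLin (Matrix.diagonal v))) x
      = (WithLp.equiv 2 (n → ℝ)).symm
          (Matrix.mulVec (Matrix.diagonal v) ((WithLp.equiv 2 (n → ℝ)) x)) := rfl
  rw [hx]
  rw [EuclideanSpace.norm_eq, EuclideanSpace.norm_eq]
  rw [← Real.sqrt_sq hC, ← Real.sqrt_mul (by positivity)]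
  apply Real.sqrt_le_sqrt
  rw [Finset.mul_sum]
  apply Finset.sum_le_sum
  intro i _
  have : (WithLp.equiv 2 (n → ℝ)).symm
        (Matrix.mulVec (Matrix.diagonal v) ((WithLp.equiv 2 (n → ℝ)) x)) i
      = v i * x i := by
    simp [Matrix.mulVec_diagonal]
  rw [this]
  have h1 : ‖v i * x i‖ ^ 2 = (v i)^2 * ‖x i‖^2 := by
    rw [norm_mul, mul_pow]; rw [Real.norm_eq_abs, sq_abs]
  rw [h1]
  have : (v i)^2 ≤ C^2 := by
    have := h i
    nlinarith [abs_nonneg (v i), sq_abs (v i)]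
  nlinarith [norm_nonneg (x i), sq_nonneg (x i)]

/-- the filtered Jordan bound in the diagonalizable case.  If
`A = S D S⁻¹` with `D` diagonal with real entries in `[−1,1]`, and
`κ_A = ‖S‖‖S⁻¹‖`, then `∑_{s=0}^∞ ‖(A² − I) A^s‖ ≤ 2 n κ_A`. -/
theorem filtered_jordan_bound_diagonalizable
    (n : ℕ) (A S S' : Matrix (Fin n) (Fin n) ℝ) (dvec : Fin n → ℝ)
    (hd : ∀ i, dvec i ∈ Set.Icc (-1 : ℝ) 1)
    (hSS' : S * S' = 1) (hS'S : S' * S = 1)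
    (hA : A = S * Matrix.diagonal dvec * S')
    (κA : ℝ) (hκ : κA = opNorm S * opNorm S') :
    Summable (fun s : ℕ => opNorm ((A ^ 2 - 1) * A ^ s)) ∧
    (∑' s : ℕ, opNorm ((A ^ 2 - 1) * A ^ s)) ≤ 2 * n * κA := by
  -- powers of A
  have hpow : ∀ k : ℕ, A ^ k = S * Matrix.diagonal (fun i => dvec i ^ k) * S' := by
    intro k
    induction k with
    | zero => simp [hSS']
    | succ k ih =>
        rw [pow_succ, ih, hA]
        simp only [Matrix.mul_assoc]
        rw [← Matrix.mul_assoc S' S, hS'S, Matrix.one_mul,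
          ← Matrix.mul_assoc (Matrix.diagonal fun i => dvec i ^ k) (Matrix.diagonal dvec),
          Matrix.diagonal_mul_diagonal]
        simp [pow_succ]
  -- the key factorization
  have hfact : ∀ s : ℕ, (A ^ 2 - 1) * A ^ s
      = S * Matrix.diagonal (fun i => (dvec i ^ 2 - 1) * dvec i ^ s) * S' := by
    intro s
    have h1 : A ^ 2 - 1 = S * Matrix.diagonal (fun i => dvec i ^ 2 - 1) * S' := by
      rw [hpow 2]
      have : (1 : Matrix (Fin n) (Fin n) ℝ) = S * Matrix.diagonal (fun _ : Fin n => (1:ℝ)) * S' := by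
        simp [hSS']
      rw [this]
      rw [← Matrix.sub_mul, ← Matrix.mul_sub, Matrix.diagonal_sub]
    rw [h1, hpow s]
    simp only [Matrix.mul_assoc]
    rw [← Matrix.mul_assoc S' S, hS'S, Matrix.one_mul,
      ← Matrix.mul_assoc (Matrix.diagonal fun i => dvec i ^ 2 - 1),
      Matrix.diagonal_mul_diagonal]
  set g : ℕ → ℝ := fun s => ∑ i, (1 - dvec i ^ 2) * |dvec i| ^ s with hg
  have hgnonneg : ∀ s i, 0 ≤ (1 - dvec i ^ 2) * |dvec i| ^ s := by
    intro s i
    obtain ⟨h1, h2⟩ := hd i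
    have h1 : 0 ≤ 1 - dvec i ^ 2 := by nlinarith
    positivity
  -- bound each term
  have hbound : ∀ s : ℕ, opNorm ((A ^ 2 - 1) * A ^ s) ≤ κA * g s := by
    intro s
    rw [hfact s]
    have h1 : opNorm (S * Matrix.diagonal (fun i => (dvec i ^ 2 - 1) * dvec i ^ s) * S')
        ≤ opNorm S * opNorm (Matrix.diagonal (fun i => (dvec i ^ 2 - 1) * dvec i ^ s)) * opNorm S' := by
      calc _ ≤ opNorm (S * Matrix.diagonal (fun i => (dvec i ^ 2 - 1) * dvec i ^ s)) * opNorm S' :=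
            opNorm_mul_le' _ _
        _ ≤ _ := by
            apply mul_le_mul_of_nonneg_right (opNorm_mul_le' _ _) (opNorm_nonneg' _)
    have hgs : 0 ≤ g s := Finset.sum_nonneg fun i _ => hgnonneg s i
    have h2 : opNorm (Matrix.diagonal (fun i => (dvec i ^ 2 - 1) * dvec i ^ s)) ≤ g s := by
      apply opNorm_diagonal_le _ _ hgs
      intro i
      have : |(dvec i ^ 2 - 1) * dvec i ^ s| = (1 - dvec i ^ 2) * |dvec i| ^ s := by
        rw [abs_mul, abs_pow]
        congr 1
        rw [abs_sub_comm, abs_of_nonneg]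
        obtain ⟨h1', h2'⟩ := hd i
        nlinarith
      rw [this]
      exact Finset.single_le_sum (fun j _ => hgnonneg s j) (Finset.mem_univ i)
    calc opNorm (S * Matrix.diagonal (fun i => (dvec i ^ 2 - 1) * dvec i ^ s) * S')
        ≤ opNorm S * opNorm (Matrix.diagonal (fun i => (dvec i ^ 2 - 1) * dvec i ^ s)) * opNorm S' := h1
      _ ≤ opNorm S * g s * opNorm S' := by
          apply mul_le_mul_of_nonneg_right _ (opNorm_nonneg' _)
          exact mul_le_mul_of_nonneg_left h2 (opNorm_nonneg' _)
      _ = κA * g s := by rw [hκ]; ring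
  -- summability of each coordinate
  have hsumi : ∀ i : Fin n, Summable (fun s : ℕ => (1 - dvec i ^ 2) * |dvec i| ^ s) := by
    intro i
    rcases lt_or_eq_of_le (abs_le.mpr ⟨(hd i).1, (hd i).2⟩) with h | h
    · exact (summable_geometric_of_lt_one (abs_nonneg _) h).mul_left _
    · have : 1 - dvec i ^ 2 = 0 := by
        have : dvec i ^ 2 = 1 := by rw [← sq_abs, h]; norm_num
        linarith
      simp only [this, zero_mul]
      exact summable_zero
  have htsumi : ∀ i : Fin n, (∑' s : ℕ, (1 - dvec i ^ 2) * |dvec i| ^ s) ≤ 2 := by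
    intro i
    rcases lt_or_eq_of_le (abs_le.mpr ⟨(hd i).1, (hd i).2⟩) with h | h
    · rw [tsum_mul_left, tsum_geometric_of_lt_one (abs_nonneg _) h]
      have h1 : (0:ℝ) < 1 - |dvec i| := by linarith
      rw [← div_eq_mul_inv, div_le_iff₀ h1]
      have habs : |dvec i| ≤ 1 := le_of_lt h
      nlinarith [sq_abs (dvec i), abs_nonneg (dvec i), sq_nonneg (1 - |dvec i|)]
    · have h0 : 1 - dvec i ^ 2 = 0 := by
        have : dvec i ^ 2 = 1 := by rw [← sq_abs, h]; norm_num
        linarith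
      simp only [h0, zero_mul, tsum_zero]
      norm_num
  have hgsummable : Summable g := by
    apply summable_sum
    intro i _
    exact hsumi i
  have hκnonneg : 0 ≤ κA := by
    rw [hκ]; exact mul_nonneg (opNorm_nonneg' _) (opNorm_nonneg' _)
  have hsummable : Summable (fun s : ℕ => opNorm ((A ^ 2 - 1) * A ^ s)) := by
    apply Summable.of_nonneg_of_le (fun s => opNorm_nonneg' _) hbound
    exact hgsummable.mul_left κA
  refine ⟨hsummable, ?_⟩
  have htg : (∑' s : ℕ, g s) ≤ 2 * n := by
    rw [hg]
    rw [Summable.tsum_finsetSum (fun i _ => hsumi i)]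
    calc (∑ i : Fin n, ∑' s : ℕ, (1 - dvec i ^ 2) * |dvec i| ^ s)
        ≤ ∑ i : Fin n, (2:ℝ) := Finset.sum_le_sum (fun i _ => htsumi i)
      _ = 2 * n := by simp [mul_comm]
  calc (∑' s : ℕ, opNorm ((A ^ 2 - 1) * A ^ s))
      ≤ ∑' s : ℕ, κA * g s := Summable.tsum_le_tsum hbound hsummable (hgsummable.mul_left κA)
    _ = κA * ∑' s, g s := tsum_mul_left
    _ ≤ κA * (2 * n) := mul_le_mul_of_nonneg_left htg hκnonneg
    _ = 2 * n * κA := by ring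
end

section
/- Consider the system x_{t+1} = A x_t + w_t, y_t = C x_t + v_t with x_0 = 0, ‖w_t‖ ≤ C_w, ‖v_t‖ ≤ C_v for all t, and the convention y_s = 0 for s ≤ 0. Suppose A ∈ ℝ^{n×n} is diagonalizable with all eigenvalues real and contained in [−1, 1], i.e., A = S D S⁻¹ with D diagonal and real entries in [−1, 1], and set κ_A := ‖S‖ ‖S⁻¹‖. Then under the 2-lag predictive hint ỹ_t := y_{t-2}, the residual satisfies, for all t ≥ 1, ‖y_t − ỹ_t‖ ≤ 2 C_v + (1 + κ_A + 2 n κ_A) ‖C‖ C_w. -/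
open scoped Matrix.Norms.L2Operator

lemma l2_diag_le {n : Type*} [Fintype n] [DecidableEq n] (f : n → ℝ) (c : ℝ)
    (hc : 0 ≤ c) (h : ∀ i, |f i| ≤ c) : ‖Matrix.diagonal f‖ ≤ c := by
  rw [Matrix.l2_opNorm_def]
  refine ContinuousLinearMap.opNorm_le_bound _ hc fun v => ?_
  simp only [LinearEquiv.trans_apply, LinearMap.coe_toContinuousLinearMap']
  have happ : ∀ i, (Matrix.toEuclideanLin (Matrix.diagonal f) v) i = f i * v i := by
    intro i
    simp [Matrix.toEuclideanLin_apply, Matrix.mulVec_diagonal]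
  rw [EuclideanSpace.norm_eq, EuclideanSpace.norm_eq]
  have : c * Real.sqrt (∑ i, ‖v i‖ ^ 2) = Real.sqrt (c^2 * ∑ i, ‖v i‖ ^ 2) := by
    rw [Real.sqrt_mul (sq_nonneg c), Real.sqrt_sq hc]
  rw [this, Finset.mul_sum]
  apply Real.sqrt_le_sqrt
  apply Finset.sum_le_sum
  intro i _
  rw [happ i]
  have h1 : ‖f i * v i‖ = |f i| * ‖v i‖ := by
    simp [abs_mul, Real.norm_eq_abs]
  rw [h1, mul_pow]
  have h2 : |f i| ^ 2 ≤ c ^ 2 := pow_le_pow_left₀ (abs_nonneg _) (h i) 2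
  exact mul_le_mul_of_nonneg_right h2 (sq_nonneg _)

lemma l2_diag_le_sum {n : Type*} [Fintype n] [DecidableEq n] (f : n → ℝ) :
    ‖Matrix.diagonal f‖ ≤ ∑ i, |f i| := by
  have hf : Matrix.diagonal f = ∑ i, Matrix.diagonal (Pi.single i (f i)) := by
    conv_lhs => rw [← Finset.univ_sum_single f]
    exact map_sum (Matrix.diagonalAddMonoidHom n ℝ) _ _
  rw [hf]
  refine le_trans (norm_sum_le _ _) (Finset.sum_le_sum fun i _ => ?_)
  refine l2_diag_le _ _ (abs_nonneg _) fun j => ?_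
  rcases eq_or_ne j i with rfl | hji
  · simp
  · simp [Pi.single_apply, hji]

lemma geom_bound (d : ℝ) (hd1 : -1 ≤ d) (hd2 : d ≤ 1) (m : ℕ) :
    (1 - d ^ 2) * ∑ k ∈ Finset.range m, |d| ^ k ≤ 2 := by
  set a := |d| with ha
  have ha0 : 0 ≤ a := abs_nonneg d
  have ha1 : a ≤ 1 := abs_le.mpr ⟨hd1, hd2⟩
  have h1 : 1 - d ^ 2 = (1 + a) * (1 - a) := by
    rw [ha, ← sq_abs d]; ring
  have h2 : (1 - a) * ∑ k ∈ Finset.range m, a ^ k = 1 - a ^ m := by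
    linear_combination -(geom_sum_mul a m)
  have ham : a ^ m ≤ 1 := pow_le_one₀ ha0 ha1
  have ham0 : 0 ≤ a ^ m := pow_nonneg ha0 m
  calc (1 - d ^ 2) * ∑ k ∈ Finset.range m, a ^ k
      = (1 + a) * ((1 - a) * ∑ k ∈ Finset.range m, a ^ k) := by rw [h1]; ring
    _ = (1 + a) * (1 - a ^ m) := by rw [h2]
    _ ≤ 2 * 1 := by
        apply mul_le_mul (by linarith) (by linarith) (by linarith) (by norm_num)
    _ = 2 := by norm_num

/-- bounded residual of the 2-lag hint `ỹ_t = y_{t-2}` for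
diagonalizable systems with real spectrum in `[−1,1]`:
`‖y_t − y_{t-2}‖ ≤ 2C_v + (1 + κ_A + 2nκ_A)‖C‖C_w` for all `t ≥ 1`.
Sequences are indexed by `ℤ` with the conventions `x_s = 0` for `s ≤ 0`,
`w_s = 0` for `s < 0` and `v_s = 0` (hence `y_s = 0`) for `s ≤ 0`. -/
theorem two_lag_hint_residual_bound
    (n p : ℕ)
    (A : Matrix (Fin n) (Fin n) ℝ) (C : Matrix (Fin p) (Fin n) ℝ)
    (S S' : Matrix (Fin n) (Fin n) ℝ) (dvec : Fin n → ℝ)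
    (hd : ∀ i, dvec i ∈ Set.Icc (-1 : ℝ) 1)
    (hSS' : S * S' = 1) (hS'S : S' * S = 1)
    (hA : A = S * Matrix.diagonal dvec * S')
    (κA : ℝ) (hκ : κA = opNorm S * opNorm S')
    (Cw Cv : ℝ)
    (x w : ℤ → Matrix (Fin n) (Fin 1) ℝ) (y v : ℤ → Matrix (Fin p) (Fin 1) ℝ)
    (hx0 : ∀ s : ℤ, s ≤ 0 → x s = 0)
    (hw0 : ∀ s : ℤ, s < 0 → w s = 0)
    (hv0 : ∀ s : ℤ, s ≤ 0 → v s = 0)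
    (hdyn : ∀ t : ℤ, x (t + 1) = A * x t + w t)
    (hout : ∀ t : ℤ, y t = C * x t + v t)
    (hw : ∀ t, opNorm (w t) ≤ Cw)
    (hv : ∀ t, opNorm (v t) ≤ Cv)
    (t : ℤ) (ht : 1 ≤ t) :
    opNorm (y t - y (t - 2)) ≤ 2 * Cv + (1 + κA + 2 * n * κA) * opNorm C * Cw := by
  simp only [opNorm_eq_norm] at hκ hw hv ⊢
  have hCw : 0 ≤ Cw := le_trans (norm_nonneg _) (hw 0)
  have hCv : 0 ≤ Cv := le_trans (norm_nonneg _) (hv 0)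
  have hκ0 : 0 ≤ κA := hκ ▸ mul_nonneg (norm_nonneg _) (norm_nonneg _)
  set D := Matrix.diagonal dvec with hD
  -- powers of A
  have hDpow : ∀ k : ℕ, A ^ k = S * D ^ k * S' := by
    intro k
    induction k with
    | zero => rw [pow_zero, pow_zero, Matrix.mul_one, hSS']
    | succ k ih =>
      rw [pow_succ, ih, hA, pow_succ]
      simp only [Matrix.mul_assoc]
      rw [← Matrix.mul_assoc S' S, hS'S, Matrix.one_mul]
  have hA2 : A * A - 1 = S * Matrix.diagonal (fun i => dvec i ^ 2 - 1) * S' := by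
    have h2 : A * A = S * Matrix.diagonal (fun i => dvec i ^ 2) * S' := by
      have := hDpow 2
      rw [pow_two] at this
      rw [this, hD, Matrix.diagonal_pow]
      rfl
    rw [h2]
    have h1 : (1 : Matrix (Fin n) (Fin n) ℝ) = S * Matrix.diagonal (fun _ : Fin n => (1:ℝ)) * S' := by
      rw [Matrix.diagonal_one, Matrix.mul_one, hSS']
    conv_lhs => rw [h1]
    rw [← Matrix.sub_mul, ← Matrix.mul_sub, Matrix.diagonal_sub]
  have hkey : ∀ k : ℕ, (A * A - 1) * A ^ k
      = S * Matrix.diagonal (fun i => (dvec i ^ 2 - 1) * dvec i ^ k) * S' := by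
    intro k
    rw [hA2, hDpow k, hD, Matrix.diagonal_pow]
    simp only [Matrix.mul_assoc]
    rw [← Matrix.mul_assoc S' S, hS'S, Matrix.one_mul,
        ← Matrix.mul_assoc (Matrix.diagonal _) (Matrix.diagonal _),
        Matrix.diagonal_mul_diagonal]
    rfl
  -- norm bounds
  have hAle : ‖A‖ ≤ κA := by
    rw [hA, hκ]
    have hdle : ‖D‖ ≤ 1 := l2_diag_le _ _ zero_le_one fun i => abs_le.mpr ⟨(hd i).1, (hd i).2⟩
    calc ‖S * D * S'‖ ≤ ‖S * D‖ * ‖S'‖ := Matrix.l2_opNorm_mul _ _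
      _ ≤ ‖S‖ * ‖D‖ * ‖S'‖ :=
          mul_le_mul_of_nonneg_right (Matrix.l2_opNorm_mul _ _) (norm_nonneg _)
      _ ≤ ‖S‖ * 1 * ‖S'‖ := by
          have := mul_le_mul_of_nonneg_left hdle (norm_nonneg S)
          exact mul_le_mul_of_nonneg_right this (norm_nonneg _)
      _ = ‖S‖ * ‖S'‖ := by ring
  have hconj : ∀ k : ℕ, ‖(A * A - 1) * A ^ k‖ ≤ κA * ∑ i, (1 - dvec i ^ 2) * |dvec i| ^ k := by
    intro k
    rw [hkey k, hκ]
    have hdiag : ‖Matrix.diagonal (fun i => (dvec i ^ 2 - 1) * dvec i ^ k)‖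
        ≤ ∑ i, (1 - dvec i ^ 2) * |dvec i| ^ k := by
      refine le_trans (l2_diag_le_sum _) (le_of_eq (Finset.sum_congr rfl fun i _ => ?_))
      rw [abs_mul, abs_pow]
      congr 1
      rw [abs_of_nonpos]
      · ring
      · nlinarith [(hd i).1, (hd i).2]
    have hsum0 : (0:ℝ) ≤ ∑ i, (1 - dvec i ^ 2) * |dvec i| ^ k := by
      refine Finset.sum_nonneg fun i _ => mul_nonneg ?_ (pow_nonneg (abs_nonneg _) k)
      nlinarith [(hd i).1, (hd i).2]
    calc ‖S * Matrix.diagonal (fun i => (dvec i ^ 2 - 1) * dvec i ^ k) * S'‖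
        ≤ ‖S * Matrix.diagonal (fun i => (dvec i ^ 2 - 1) * dvec i ^ k)‖ * ‖S'‖ :=
          Matrix.l2_opNorm_mul _ _
      _ ≤ ‖S‖ * ‖Matrix.diagonal (fun i => (dvec i ^ 2 - 1) * dvec i ^ k)‖ * ‖S'‖ :=
          mul_le_mul_of_nonneg_right (Matrix.l2_opNorm_mul _ _) (norm_nonneg _)
      _ ≤ ‖S‖ * (∑ i, (1 - dvec i ^ 2) * |dvec i| ^ k) * ‖S'‖ := by
          exact mul_le_mul_of_nonneg_right
            (mul_le_mul_of_nonneg_left hdiag (norm_nonneg S)) (norm_nonneg _)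
      _ = ‖S‖ * ‖S'‖ * ∑ i, (1 - dvec i ^ 2) * |dvec i| ^ k := by ring
  -- trajectory formula
  have hxm : ∀ m : ℕ, x (m : ℤ) = ∑ j ∈ Finset.range m, A ^ (m - 1 - j) * w (j : ℤ) := by
    intro m
    induction m with
    | zero => simpa using hx0 0 le_rfl
    | succ m ih =>
      have hcast : ((m + 1 : ℕ) : ℤ) = (m : ℤ) + 1 := by push_cast; ring
      rw [hcast, hdyn (m : ℤ), ih, Matrix.mul_sum, Finset.sum_range_succ]
      simp only [Nat.add_sub_cancel]
      congr 1
      · refine Finset.sum_congr rfl fun j hj => ?_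
        have hj' : j < m := Finset.mem_range.mp hj
        rw [← Matrix.mul_assoc, ← pow_succ']
        have he : m - 1 - j + 1 = m - j := by omega
        rw [he]
      · rw [Nat.sub_self, pow_zero, Matrix.one_mul]
  -- the key residual bound
  have hxb : ∀ s : ℤ, ‖(A * A - 1) * x s‖ ≤ 2 * n * κA * Cw := by
    intro s
    have hrhs0 : 0 ≤ 2 * (n:ℝ) * κA * Cw := by positivity
    rcases le_or_gt s 0 with hs | hs
    · rw [hx0 s hs, Matrix.mul_zero, norm_zero]
      exact hrhs0
    · obtain ⟨m, rfl⟩ : ∃ m : ℕ, s = (m : ℤ) := ⟨s.toNat, (Int.toNat_of_nonneg hs.le).symm⟩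
      rw [hxm m, Matrix.mul_sum]
      have step : ∀ j ∈ Finset.range m,
          ‖(A * A - 1) * (A ^ (m - 1 - j) * w (j:ℤ))‖
          ≤ (κA * ∑ i, (1 - dvec i ^ 2) * |dvec i| ^ (m - 1 - j)) * Cw := by
        intro j _
        rw [← Matrix.mul_assoc]
        calc ‖(A * A - 1) * A ^ (m - 1 - j) * w (j:ℤ)‖
            ≤ ‖(A * A - 1) * A ^ (m - 1 - j)‖ * ‖w (j:ℤ)‖ := Matrix.l2_opNorm_mul _ _
          _ ≤ (κA * ∑ i, (1 - dvec i ^ 2) * |dvec i| ^ (m - 1 - j)) * Cw := by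
              apply mul_le_mul (hconj _) (hw _) (norm_nonneg _)
              exact le_trans (norm_nonneg _) (hconj (m - 1 - j))
      calc ‖∑ j ∈ Finset.range m, (A * A - 1) * (A ^ (m - 1 - j) * w (j:ℤ))‖
          ≤ ∑ j ∈ Finset.range m, ‖(A * A - 1) * (A ^ (m - 1 - j) * w (j:ℤ))‖ :=
            norm_sum_le _ _
        _ ≤ ∑ j ∈ Finset.range m,
              (κA * ∑ i, (1 - dvec i ^ 2) * |dvec i| ^ (m - 1 - j)) * Cw :=
            Finset.sum_le_sum step
        _ = κA * (∑ j ∈ Finset.range m, ∑ i, (1 - dvec i ^ 2) * |dvec i| ^ (m - 1 - j)) * Cw := by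
            conv_rhs => rw [Finset.mul_sum, Finset.sum_mul]
        _ = κA * (∑ k ∈ Finset.range m, ∑ i, (1 - dvec i ^ 2) * |dvec i| ^ k) * Cw := by
            rw [Finset.sum_range_reflect (fun k => ∑ i, (1 - dvec i ^ 2) * |dvec i| ^ k) m]
        _ ≤ κA * (2 * n) * Cw := by
            refine mul_le_mul_of_nonneg_right (mul_le_mul_of_nonneg_left ?_ hκ0) hCw
            rw [Finset.sum_comm]
            calc ∑ i, ∑ k ∈ Finset.range m, (1 - dvec i ^ 2) * |dvec i| ^ k
                = ∑ i : Fin n, (1 - dvec i ^ 2) * ∑ k ∈ Finset.range m, |dvec i| ^ k := by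
                  refine Finset.sum_congr rfl fun i _ => ?_
                  rw [Finset.mul_sum]
              _ ≤ ∑ i : Fin n, (2:ℝ) :=
                  Finset.sum_le_sum fun i _ => geom_bound (dvec i) (hd i).1 (hd i).2 m
              _ = 2 * n := by
                  rw [Finset.sum_const, Finset.card_univ, Fintype.card_fin]
                  push_cast
                  ring
        _ = 2 * n * κA * Cw := by ring
  -- dynamics over two steps
  have h1 : x t = A * x (t - 1) + w (t - 1) := by
    have := hdyn (t - 1)
    rwa [sub_add_cancel] at this
  have h2 : x (t - 1) = A * x (t - 2) + w (t - 2) := by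
    have := hdyn (t - 2)
    have e : t - 2 + 1 = t - 1 := by ring
    rwa [e] at this
  have hxd : x t - x (t - 2) = (A * A - 1) * x (t - 2) + A * w (t - 2) + w (t - 1) := by
    rw [h1, h2, Matrix.mul_add, ← Matrix.mul_assoc, Matrix.sub_mul, Matrix.one_mul]
    abel
  have hyd : y t - y (t - 2) = C * (x t - x (t - 2)) + (v t - v (t - 2)) := by
    rw [hout t, hout (t - 2), Matrix.mul_sub]
    abel
  have hxdb : ‖x t - x (t - 2)‖ ≤ 2 * n * κA * Cw + κA * Cw + Cw := by
    rw [hxd]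
    calc ‖(A * A - 1) * x (t - 2) + A * w (t - 2) + w (t - 1)‖
        ≤ ‖(A * A - 1) * x (t - 2) + A * w (t - 2)‖ + ‖w (t - 1)‖ := norm_add_le _ _
      _ ≤ ‖(A * A - 1) * x (t - 2)‖ + ‖A * w (t - 2)‖ + ‖w (t - 1)‖ := by
          exact add_le_add_left (norm_add_le _ _) _
      _ ≤ 2 * n * κA * Cw + κA * Cw + Cw := by
          refine add_le_add (add_le_add (hxb _) ?_) (hw _)
          calc ‖A * w (t - 2)‖ ≤ ‖A‖ * ‖w (t - 2)‖ := Matrix.l2_opNorm_mul _ _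
            _ ≤ κA * Cw := mul_le_mul hAle (hw _) (norm_nonneg _) hκ0
  calc ‖y t - y (t - 2)‖ ≤ ‖C * (x t - x (t - 2))‖ + ‖v t - v (t - 2)‖ := by
        rw [hyd]; exact norm_add_le _ _
    _ ≤ ‖C‖ * ‖x t - x (t - 2)‖ + (‖v t‖ + ‖v (t - 2)‖) :=
        add_le_add (Matrix.l2_opNorm_mul _ _) (norm_sub_le _ _)
    _ ≤ ‖C‖ * (2 * n * κA * Cw + κA * Cw + Cw) + (Cv + Cv) :=
        add_le_add (mul_le_mul_of_nonneg_left hxdb (norm_nonneg _))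
          (add_le_add (hv _) (hv _))
    _ = 2 * Cv + (1 + κA + 2 * n * κA) * ‖C‖ * Cw := by ring
end
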